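/- arXiv:1906.05054 — 4 statements merged into one kernel-verified Lean document; each statement's English description precedes it below -/
import Mathlib

section
/- For functions f, g, h on ℝ³ with f, ∂₁f, g, ∂₂g, h, ∂₃h all in L²(ℝ³), the integral ∫_{ℝ³} |f g h| dx is bounded by a universal constant times ‖f‖_{L²}^{1/2} ‖∂₁f‖_{L²}^{1/2} ‖g‖_{L²}^{1/2} ‖∂₂g‖_{L²}^{1/2} ‖h‖_{L²}^{1/2} ‖∂₃h‖_{L²}^{1/2}. In fact the constant 2^{3/2} suffices. -/
open MeasureTheory
open ENNReal

/-- Partial derivative in the `i`-th coordinate direction on `ℝ³`. -/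
noncomputable def pd (i : Fin 3) (f : (Fin 3 → ℝ) → ℝ) : (Fin 3 → ℝ) → ℝ :=
  fun x => fderiv ℝ f x (Pi.single i 1)

/-- The `L²(ℝ³)` norm. -/
noncomputable def L2 (f : (Fin 3 → ℝ) → ℝ) : ℝ :=
  (eLpNorm f 2 volume).toReal

lemma sq_le_two_integral_abs (u u' : ℝ → ℝ)
    (hu : ∀ t, HasDerivAt u (u' t) t)
    (h2 : Integrable (fun t => u t ^ 2) volume)
    (hI : Integrable (fun t => u t * u' t) volume) (t : ℝ) :
    u t ^ 2 ≤ 2 * ∫ s, |u s * u' s| := by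
  have hIa : Integrable (fun s => |2 * (u s * u' s)|) volume := (hI.const_mul 2).abs
  have key : ∀ s : ℝ, u t ^ 2 ≤ u s ^ 2 + ∫ x, |2 * (u x * u' x)| := by
    intro s
    have hsub : ∫ x in s..t, 2 * (u x * u' x) = u t ^ 2 - u s ^ 2 := by
      apply intervalIntegral.integral_eq_sub_of_hasDerivAt
      · intro x _
        have := (hu x).pow 2
        simpa [Pi.pow_def, mul_assoc, mul_comm, mul_left_comm] using this
      · exact (hI.const_mul 2).intervalIntegrable
    have h1 : u t ^ 2 - u s ^ 2 ≤ |∫ x in s..t, 2 * (u x * u' x)| := hsub ▸ le_abs_self _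
    have h3 : |∫ x in s..t, 2 * (u x * u' x)| ≤ ∫ x in Set.uIoc s t, |2 * (u x * u' x)| := by
      have := intervalIntegral.norm_integral_le_integral_norm_uIoc
        (f := fun x => 2 * (u x * u' x)) (a := s) (b := t) (μ := volume)
      simp only [Real.norm_eq_abs] at this
      exact this
    have h4 : ∫ x in Set.uIoc s t, |2 * (u x * u' x)| ≤ ∫ x, |2 * (u x * u' x)| :=
      setIntegral_le_integral hIa (Filter.Eventually.of_forall fun x => abs_nonneg _)
    linarith
  have habs : ∫ x, |2 * (u x * u' x)| = 2 * ∫ s, |u s * u' s| := by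
    simp_rw [abs_mul, abs_two]
    rw [integral_const_mul]
  rw [← habs]
  refine le_of_forall_pos_le_add fun ε hε => ?_
  -- find s with u s ^ 2 < ε
  by_contra hcon
  push_neg at hcon
  have hall : ∀ s : ℝ, ε ≤ u s ^ 2 := by
    intro s
    by_contra hs
    push_neg at hs
    exact absurd (key s) (by push_neg; linarith)
  have hfin : volume {x : ℝ | ε ≤ u x ^ 2} < ⊤ := by
    have := h2.measure_ge_lt_top hε
    simpa using this
  have : {x : ℝ | ε ≤ u x ^ 2} = Set.univ := Set.eq_univ_of_forall hall
  rw [this] at hfin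
  simp [Real.volume_univ] at hfin

lemma cauchy_schwarz_lintegral {α : Type*} [MeasurableSpace α] (μ : Measure α)
    (φ ψ : α → ℝ≥0∞) (hφ : Measurable φ) (hψ : Measurable ψ) :
    ∫⁻ a, φ a ^ (1/2:ℝ) * ψ a ^ (1/2:ℝ) ∂μ ≤
      (∫⁻ a, φ a ∂μ) ^ (1/2:ℝ) * (∫⁻ a, ψ a ∂μ) ^ (1/2:ℝ) := by
  have h := ENNReal.lintegral_mul_le_Lp_mul_Lq μ (Real.holderConjugate_iff_eq_conjExponent
    (by norm_num)|>.mpr (by norm_num) : Real.HolderConjugate 2 2)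
    (f := fun a => φ a ^ (1/2:ℝ)) (g := fun a => ψ a ^ (1/2:ℝ))
    (hφ.pow_const _).aemeasurable (hψ.pow_const _).aemeasurable
  simp only [Pi.mul_apply] at h
  have e : ∀ x : ℝ≥0∞, (x ^ (1/2:ℝ)) ^ (2:ℝ) = x := by
    intro x; rw [← ENNReal.rpow_mul]; norm_num
  simp only [e] at h
  exact h

lemma loomis_whitney (U V W : ℝ × ℝ → ℝ≥0∞) (hU : Measurable U) (hV : Measurable V)
    (hW : Measurable W) :
    ∫⁻ x : ℝ × ℝ × ℝ, U (x.2.1, x.2.2) ^ (1/2:ℝ) * V (x.1, x.2.2) ^ (1/2:ℝ) *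
        W (x.1, x.2.1) ^ (1/2:ℝ)
      ≤ (∫⁻ y, U y) ^ (1/2:ℝ) * (∫⁻ y, V y) ^ (1/2:ℝ) * (∫⁻ y, W y) ^ (1/2:ℝ) := by
  set A : ℝ → ℝ≥0∞ := fun c => ∫⁻ a, V (a, c) with hA
  set B : ℝ → ℝ≥0∞ := fun b => ∫⁻ a, W (a, b) with hB
  have hVm : Measurable fun p : ℝ × ℝ => V (p.1, p.2) :=
    hV.comp (measurable_fst.prodMk measurable_snd)
  have hWm : Measurable fun p : ℝ × ℝ => W (p.1, p.2) :=
    hW.comp (measurable_fst.prodMk measurable_snd)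
  have hAm : Measurable A := Measurable.lintegral_prod_left (f := fun a c => V (a, c)) hVm
  have hBm : Measurable B := Measurable.lintegral_prod_left (f := fun a b => W (a, b)) hWm
  have hmeas : Measurable (fun x : ℝ × ℝ × ℝ => U (x.2.1, x.2.2) ^ (1/2:ℝ) *
      V (x.1, x.2.2) ^ (1/2:ℝ) * W (x.1, x.2.1) ^ (1/2:ℝ)) := by fun_prop
  have hAB : ∫⁻ bc : ℝ × ℝ, A bc.2 * B bc.1 = (∫⁻ y, V y) * ∫⁻ y, W y := by
    rw [Measure.volume_eq_prod, lintegral_prod _ (by fun_prop),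
      lintegral_prod_symm _ hV.aemeasurable, lintegral_prod_symm _ hW.aemeasurable]
    calc ∫⁻ b, ∫⁻ c, A c * B b
        = ∫⁻ b, (∫⁻ c, A c) * B b := by
          congr 1; ext b; exact lintegral_mul_const _ hAm
      _ = (∫⁻ c, A c) * ∫⁻ b, B b := lintegral_const_mul _ hBm
  calc ∫⁻ x : ℝ × ℝ × ℝ, U (x.2.1, x.2.2) ^ (1/2:ℝ) * V (x.1, x.2.2) ^ (1/2:ℝ) *
          W (x.1, x.2.1) ^ (1/2:ℝ)
      = ∫⁻ bc : ℝ × ℝ, ∫⁻ a, U (bc.1, bc.2) ^ (1/2:ℝ) * V (a, bc.2) ^ (1/2:ℝ) *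
          W (a, bc.1) ^ (1/2:ℝ) := by
        rw [Measure.volume_eq_prod]; exact lintegral_prod_symm _ hmeas.aemeasurable
    _ ≤ ∫⁻ bc : ℝ × ℝ, U bc ^ (1/2:ℝ) * (A bc.2 * B bc.1) ^ (1/2:ℝ) := by
        refine lintegral_mono fun bc => ?_
        calc ∫⁻ a, U (bc.1, bc.2) ^ (1/2:ℝ) * V (a, bc.2) ^ (1/2:ℝ) * W (a, bc.1) ^ (1/2:ℝ)
            = U bc ^ (1/2:ℝ) * ∫⁻ a, V (a, bc.2) ^ (1/2:ℝ) * W (a, bc.1) ^ (1/2:ℝ) := by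
              rw [← lintegral_const_mul _ (by fun_prop)]
              simp [mul_assoc]
          _ ≤ U bc ^ (1/2:ℝ) * (A bc.2 ^ (1/2:ℝ) * B bc.1 ^ (1/2:ℝ)) := by
              gcongr
              exact cauchy_schwarz_lintegral volume _ _ (by fun_prop) (by fun_prop)
          _ = U bc ^ (1/2:ℝ) * (A bc.2 * B bc.1) ^ (1/2:ℝ) := by
              rw [ENNReal.mul_rpow_of_nonneg _ _ (by norm_num)]
    _ ≤ (∫⁻ y, U y) ^ (1/2:ℝ) * (∫⁻ bc : ℝ × ℝ, A bc.2 * B bc.1) ^ (1/2:ℝ) :=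
        cauchy_schwarz_lintegral volume U (fun bc => A bc.2 * B bc.1) hU (by fun_prop)
    _ = (∫⁻ y, U y) ^ (1/2:ℝ) * (∫⁻ y, V y) ^ (1/2:ℝ) * (∫⁻ y, W y) ^ (1/2:ℝ) := by
        rw [hAB, ENNReal.mul_rpow_of_nonneg _ _ (by norm_num : (0:ℝ) ≤ 1/2), mul_assoc]

lemma enn_sq (x : ℝ) : (‖x‖₊ : ℝ≥0∞) ^ (2:ℝ) = ENNReal.ofReal (x ^ 2) := by
  have h2 : ((2:ℝ)) = ((2:ℕ):ℝ) := by norm_num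
  rw [h2, ENNReal.rpow_natCast, ← Real.enorm_eq_ofReal (sq_nonneg x), ← ENNReal.coe_pow]
  congr 1
  ext
  simp [sq, abs_mul]

lemma slice_ae_bound (F F' : ℝ × ℝ × ℝ → ℝ)
    (hFm : Measurable F) (hF'm : Measurable F')
    (hder : ∀ (b c a : ℝ), HasDerivAt (fun t => F (t, b, c)) (F' (a, b, c)) a)
    (hF2 : ∫⁻ y, (‖F y‖₊ : ℝ≥0∞) ^ (2:ℝ) ≠ ∞)
    (hF'2 : ∫⁻ y, (‖F' y‖₊ : ℝ≥0∞) ^ (2:ℝ) ≠ ∞) :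
    ∀ᵐ y : ℝ × ℝ × ℝ, (‖F y‖₊ : ℝ≥0∞) ^ (2:ℝ) ≤
      2 * ∫⁻ a, (‖F (a, y.2.1, y.2.2)‖₊ : ℝ≥0∞) * ‖F' (a, y.2.1, y.2.2)‖₊ := by
  -- slicewise finiteness, a.e. in bc
  have key : ∀ᵐ bc : ℝ × ℝ,
      (∫⁻ a, (‖F (a, bc.1, bc.2)‖₊ : ℝ≥0∞) ^ (2:ℝ)) < ∞ ∧
      (∫⁻ a, (‖F' (a, bc.1, bc.2)‖₊ : ℝ≥0∞) ^ (2:ℝ)) < ∞ := by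
    have fin : ∀ (G : ℝ × ℝ × ℝ → ℝ), Measurable G →
        (∫⁻ y, (‖G y‖₊ : ℝ≥0∞) ^ (2:ℝ) ≠ ∞) →
        ∀ᵐ bc : ℝ × ℝ, (∫⁻ a, (‖G (a, bc.1, bc.2)‖₊ : ℝ≥0∞) ^ (2:ℝ)) < ∞ := by
      intro G hGm hG2
      have hmi : Measurable fun y : ℝ × ℝ × ℝ => (‖G y‖₊ : ℝ≥0∞) ^ (2:ℝ) := by fun_prop
      have heq : ∫⁻ bc : ℝ × ℝ, ∫⁻ a, (‖G (a, bc.1, bc.2)‖₊ : ℝ≥0∞) ^ (2:ℝ)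
          = ∫⁻ y, (‖G y‖₊ : ℝ≥0∞) ^ (2:ℝ) := by
        rw [Measure.volume_eq_prod (α := ℝ) (β := ℝ × ℝ), lintegral_prod_symm _ hmi.aemeasurable]
      refine ae_lt_top ?_ (by rw [heq]; exact hG2)
      exact Measurable.lintegral_prod_left
        (f := fun (a : ℝ) (bc : ℝ × ℝ) => (‖G (a, bc.1, bc.2)‖₊ : ℝ≥0∞) ^ (2:ℝ)) (by fun_prop)
    exact (fin F hFm hF2).and (fin F' hF'm hF'2)
  -- lift to a.e. y via projection y ↦ y.2
  have lift : ∀ᵐ y : ℝ × ℝ × ℝ,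
      (∫⁻ a, (‖F (a, y.2.1, y.2.2)‖₊ : ℝ≥0∞) ^ (2:ℝ)) < ∞ ∧
      (∫⁻ a, (‖F' (a, y.2.1, y.2.2)‖₊ : ℝ≥0∞) ^ (2:ℝ)) < ∞ := by
    rw [ae_iff] at key ⊢
    obtain ⟨S, hSsup, hSm, hS0⟩ := exists_measurable_superset_of_null key
    have hsub : {y : ℝ × ℝ × ℝ |
        ¬ ((∫⁻ a, (‖F (a, y.2.1, y.2.2)‖₊ : ℝ≥0∞) ^ (2:ℝ)) < ∞ ∧
           (∫⁻ a, (‖F' (a, y.2.1, y.2.2)‖₊ : ℝ≥0∞) ^ (2:ℝ)) < ∞)} ⊆ Set.univ ×ˢ S := by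
      intro y hy
      exact ⟨Set.mem_univ _, hSsup hy⟩
    refine measure_mono_null hsub ?_
    rw [Measure.volume_eq_prod (α := ℝ) (β := ℝ × ℝ), Measure.prod_prod, hS0, mul_zero]
  -- main pointwise argument
  filter_upwards [lift] with y hy
  obtain ⟨h1, h2⟩ := hy
  set b := y.2.1; set c := y.2.2
  set u : ℝ → ℝ := fun a => F (a, b, c) with hu
  set u' : ℝ → ℝ := fun a => F' (a, b, c) with hu'
  have hum : Measurable u := hFm.comp (by fun_prop)
  have hu'm : Measurable u' := hF'm.comp (by fun_prop)
  have hmu : MemLp u 2 (volume : Measure ℝ) := by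
    refine ⟨hum.aestronglyMeasurable, ?_⟩
    rw [eLpNorm_eq_lintegral_rpow_enorm_toReal (by norm_num) (by norm_num)]
    refine ENNReal.rpow_lt_top_of_nonneg (by norm_num) ?_
    simpa [enorm_eq_nnnorm] using h1.ne
  have hmu' : MemLp u' 2 (volume : Measure ℝ) := by
    refine ⟨hu'm.aestronglyMeasurable, ?_⟩
    rw [eLpNorm_eq_lintegral_rpow_enorm_toReal (by norm_num) (by norm_num)]
    refine ENNReal.rpow_lt_top_of_nonneg (by norm_num) ?_
    simpa [enorm_eq_nnnorm] using h2.ne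
  have hint2 : Integrable (fun a => u a ^ 2) volume := by
    have := memLp_one_iff_integrable.mp
      (hmu.smul (p := 2) (q := 2) (r := 1) hmu)
    simpa [smul_eq_mul, sq, Pi.mul_def] using this
  have hintI : Integrable (fun a => u a * u' a) volume := by
    have := memLp_one_iff_integrable.mp
      (hmu'.smul (p := 2) (q := 2) (r := 1) hmu)
    simpa [smul_eq_mul, mul_comm, Pi.mul_def] using this
  have hsq := sq_le_two_integral_abs u u' (hder b c) hint2 hintI y.1
  -- convert to ℝ≥0∞
  have hoR : ENNReal.ofReal (∫ s, |u s * u' s|) = ∫⁻ a, (‖u a‖₊ : ℝ≥0∞) * ‖u' a‖₊ := by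
    have := ofReal_integral_norm_eq_lintegral_enorm hintI
    simp only [Real.norm_eq_abs, enorm_mul, enorm_eq_nnnorm, nnnorm_mul, ENNReal.coe_mul] at this
    exact this
  calc (‖F y‖₊ : ℝ≥0∞) ^ (2:ℝ) = ENNReal.ofReal (u y.1 ^ 2) := enn_sq (u y.1)
    _ ≤ ENNReal.ofReal (2 * ∫ s, |u s * u' s|) := ENNReal.ofReal_le_ofReal hsq
    _ = 2 * ∫⁻ a, (‖u a‖₊ : ℝ≥0∞) * ‖u' a‖₊ := by
        rw [ENNReal.ofReal_mul (by norm_num), hoR]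
        norm_num

noncomputable def e3 : (Fin 3 → ℝ) ≃ᵐ ℝ × ℝ × ℝ :=
  (MeasurableEquiv.piFinSuccAbove (fun _ : Fin 3 => ℝ) 0).trans
    ((MeasurableEquiv.refl ℝ).prodCongr
      ((MeasurableEquiv.piFinSuccAbove (fun _ : Fin 2 => ℝ) 0).trans
        ((MeasurableEquiv.refl ℝ).prodCongr (MeasurableEquiv.funUnique (Fin 1) ℝ))))

lemma e3_apply (x : Fin 3 → ℝ) : e3 x = (x 0, x 1, x 2) := rfl

lemma e3_symm_apply (a b c : ℝ) : e3.symm (a, b, c) = ![a, b, c] := by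
  apply e3.injective
  rw [MeasurableEquiv.apply_symm_apply, e3_apply]
  simp [Matrix.cons_val_zero, Matrix.cons_val_one]

lemma e3_mp : MeasurePreserving (⇑e3) volume volume := by
  have h1 := MeasureTheory.volume_preserving_piFinSuccAbove (fun _ : Fin 3 => ℝ) 0
  have h2 := MeasureTheory.volume_preserving_piFinSuccAbove (fun _ : Fin 2 => ℝ) 0
  have h3 := MeasureTheory.volume_preserving_funUnique (Fin 1) ℝ
  have hinner : MeasurePreserving
      (⇑((MeasurableEquiv.piFinSuccAbove (fun _ : Fin 2 => ℝ) 0).trans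
        ((MeasurableEquiv.refl ℝ).prodCongr (MeasurableEquiv.funUnique (Fin 1) ℝ))))
      volume volume := by
    have hp : MeasurePreserving
        (Prod.map (id : ℝ → ℝ) (⇑(MeasurableEquiv.funUnique (Fin 1) ℝ)))
        (volume.prod volume) (volume.prod volume) :=
      (MeasurePreserving.id volume).prod h3
    exact MeasurePreserving.comp (g := Prod.map (id : ℝ → ℝ)
      (⇑(MeasurableEquiv.funUnique (Fin 1) ℝ))) hp h2
  have hp2 : MeasurePreserving
      (Prod.map (id : ℝ → ℝ)
        (⇑((MeasurableEquiv.piFinSuccAbove (fun _ : Fin 2 => ℝ) 0).trans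
          ((MeasurableEquiv.refl ℝ).prodCongr (MeasurableEquiv.funUnique (Fin 1) ℝ)))))
      (volume.prod volume) (volume.prod volume) :=
    (MeasurePreserving.id volume).prod hinner
  have hco : ⇑e3 = (Prod.map (id : ℝ → ℝ)
      (⇑((MeasurableEquiv.piFinSuccAbove (fun _ : Fin 2 => ℝ) 0).trans
        ((MeasurableEquiv.refl ℝ).prodCongr (MeasurableEquiv.funUnique (Fin 1) ℝ))))) ∘
      ⇑(MeasurableEquiv.piFinSuccAbove (fun _ : Fin 3 => ℝ) 0) := by
    funext x; rfl
  rw [hco]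
  exact hp2.comp h1

lemma mp_prodAssoc :
    MeasurePreserving (⇑(MeasurableEquiv.prodAssoc : (ℝ × ℝ) × ℝ ≃ᵐ ℝ × ℝ × ℝ))
      volume volume := measurePreserving_prodAssoc volume volume volume

/-- (b, (a, c)) ↦ (a, (b, c)) -/
noncomputable def σg : ℝ × ℝ × ℝ ≃ᵐ ℝ × ℝ × ℝ :=
  MeasurableEquiv.prodAssoc.symm.trans
    ((MeasurableEquiv.prodComm.prodCongr (MeasurableEquiv.refl ℝ)).trans
      MeasurableEquiv.prodAssoc)

lemma σg_apply (b a c : ℝ) : σg (b, a, c) = (a, b, c) := rfl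

lemma σg_mp : MeasurePreserving (⇑σg) volume volume := by
  have hswap : MeasurePreserving (Prod.swap : ℝ × ℝ → ℝ × ℝ) volume volume :=
    Measure.measurePreserving_swap
  have hmid : MeasurePreserving (Prod.map (Prod.swap : ℝ × ℝ → ℝ × ℝ) (id : ℝ → ℝ))
      (volume.prod volume) (volume.prod volume) := hswap.prod (MeasurePreserving.id volume)
  exact (mp_prodAssoc.comp hmid).comp (mp_prodAssoc.symm _)

/-- (c, (a, b)) ↦ (a, (b, c)) -/
noncomputable def σh : ℝ × ℝ × ℝ ≃ᵐ ℝ × ℝ × ℝ :=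
  (MeasurableEquiv.prodComm : ℝ × (ℝ × ℝ) ≃ᵐ (ℝ × ℝ) × ℝ).trans MeasurableEquiv.prodAssoc

lemma σh_apply (c a b : ℝ) : σh (c, a, b) = (a, b, c) := rfl

lemma σh_mp : MeasurePreserving (⇑σh) volume volume := by
  have hswap : MeasurePreserving (Prod.swap : ℝ × (ℝ × ℝ) → (ℝ × ℝ) × ℝ) volume volume :=
    Measure.measurePreserving_swap
  exact mp_prodAssoc.comp hswap

lemma eLpNorm_two_eq {α : Type*} [MeasurableSpace α] (μ : Measure α) (φ : α → ℝ) :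
    eLpNorm φ 2 μ = (∫⁻ x, (‖φ x‖₊ : ℝ≥0∞) ^ (2:ℝ) ∂μ) ^ (1/2:ℝ) := by
  rw [eLpNorm_eq_lintegral_rpow_enorm_toReal (by norm_num) (by norm_num)]
  simp only [enorm_eq_nnnorm]
  norm_num

lemma lint_sq_ne_top {α : Type*} [MeasurableSpace α] {μ : Measure α} {φ : α → ℝ}
    (hφ : MemLp φ 2 μ) : ∫⁻ x, (‖φ x‖₊ : ℝ≥0∞) ^ (2:ℝ) ∂μ ≠ ∞ := by
  intro hcon
  have := hφ.eLpNorm_lt_top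
  rw [eLpNorm_two_eq, hcon] at this
  simp [ENNReal.top_rpow_of_pos] at this

lemma hasDerivAt_coord (φ : (Fin 3 → ℝ) → ℝ) (hφ : Differentiable ℝ φ) (i : Fin 3)
    (x : Fin 3 → ℝ) (a : ℝ) :
    HasDerivAt (fun t => φ (Function.update x i t))
      (fderiv ℝ φ (Function.update x i a) (Pi.single i 1)) a := by
  have hpath : (fun t : ℝ => Function.update x i t)
      = fun t => x + (t - x i) • (Pi.single i 1 : Fin 3 → ℝ) := by
    funext t; funext j
    by_cases hj : j = i
    · subst hj; simp [Function.update]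
    · simp [Function.update, hj, Pi.single_eq_of_ne hj]
  have hγ : HasDerivAt (fun t : ℝ => Function.update x i t) (Pi.single i 1) a := by
    rw [hpath]
    have h1 : HasDerivAt (fun t : ℝ => (t - x i)) 1 a := (hasDerivAt_id a).sub_const _
    have := (h1.smul_const (Pi.single i 1 : Fin 3 → ℝ)).const_add x
    simpa using this
  exact ((hφ _).hasFDerivAt.comp_hasDerivAt a hγ)

lemma line_integral_package (Φ Φ' : ℝ × ℝ × ℝ → ℝ) (hΦm : Measurable Φ)
    (hΦ'm : Measurable Φ') :
    Measurable (fun bc : ℝ × ℝ =>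
        ∫⁻ a, (‖Φ (a, bc.1, bc.2)‖₊ : ℝ≥0∞) * ‖Φ' (a, bc.1, bc.2)‖₊) ∧
    ∫⁻ bc : ℝ × ℝ, ∫⁻ a, (‖Φ (a, bc.1, bc.2)‖₊ : ℝ≥0∞) * ‖Φ' (a, bc.1, bc.2)‖₊
      ≤ (∫⁻ y, (‖Φ y‖₊ : ℝ≥0∞) ^ (2:ℝ)) ^ (1/2:ℝ) *
        (∫⁻ y, (‖Φ' y‖₊ : ℝ≥0∞) ^ (2:ℝ)) ^ (1/2:ℝ) := by
  constructor
  · exact Measurable.lintegral_prod_left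
      (f := fun (a : ℝ) (bc : ℝ × ℝ) => (‖Φ (a, bc.1, bc.2)‖₊ : ℝ≥0∞) * ‖Φ' (a, bc.1, bc.2)‖₊)
      (by fun_prop)
  · have heq : ∫⁻ bc : ℝ × ℝ, ∫⁻ a, (‖Φ (a, bc.1, bc.2)‖₊ : ℝ≥0∞) * ‖Φ' (a, bc.1, bc.2)‖₊
        = ∫⁻ y : ℝ × ℝ × ℝ, (‖Φ y‖₊ : ℝ≥0∞) * ‖Φ' y‖₊ := by
      rw [Measure.volume_eq_prod (α := ℝ) (β := ℝ × ℝ),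
        lintegral_prod_symm _ (by fun_prop : Measurable fun y : ℝ × ℝ × ℝ =>
          (‖Φ y‖₊ : ℝ≥0∞) * ‖Φ' y‖₊).aemeasurable]
    rw [heq]
    have e2 : ∀ x : ℝ≥0∞, (x ^ (2:ℝ)) ^ (1/2:ℝ) = x := by
      intro x; rw [← ENNReal.rpow_mul]; norm_num
    have hcs := cauchy_schwarz_lintegral volume (fun y => (‖Φ y‖₊ : ℝ≥0∞) ^ (2:ℝ))
      (fun y => (‖Φ' y‖₊ : ℝ≥0∞) ^ (2:ℝ)) (by fun_prop) (by fun_prop)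
    simpa only [e2] using hcs

/-- Anisotropic trilinear estimate:
`∫ |f g h| ≤ 2^{3/2} ‖f‖^{1/2}‖∂₁f‖^{1/2}‖g‖^{1/2}‖∂₂g‖^{1/2}‖h‖^{1/2}‖∂₃h‖^{1/2}`. -/
theorem anisotropic_trilinear (f g h : (Fin 3 → ℝ) → ℝ)
    (hfd : Differentiable ℝ f) (hgd : Differentiable ℝ g) (hhd : Differentiable ℝ h)
    (hf : MemLp f 2 volume) (hf1 : MemLp (pd 0 f) 2 volume)
    (hg : MemLp g 2 volume) (hg2 : MemLp (pd 1 g) 2 volume)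
    (hh : MemLp h 2 volume) (hh3 : MemLp (pd 2 h) 2 volume) :
    ∫ x, |f x * g x * h x| ≤
      (2 : ℝ) ^ ((3 : ℝ)/2) * L2 f ^ ((1:ℝ)/2) * L2 (pd 0 f) ^ ((1:ℝ)/2) *
        L2 g ^ ((1:ℝ)/2) * L2 (pd 1 g) ^ ((1:ℝ)/2) *
        L2 h ^ ((1:ℝ)/2) * L2 (pd 2 h) ^ ((1:ℝ)/2) := by
  classical
  -- measurability
  have hfm : Measurable f := hfd.continuous.measurable
  have hgm : Measurable g := hgd.continuous.measurable
  have hhm : Measurable h := hhd.continuous.measurable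
  have hpdm : ∀ (i : Fin 3) (φ : (Fin 3 → ℝ) → ℝ), Measurable (pd i φ) := fun i φ => by
    unfold pd
    exact measurable_fderiv_apply_const ℝ φ (Pi.single i 1 : Fin 3 → ℝ)
  have hesm : Measurable (⇑e3.symm) := e3.symm.measurable
  -- prod-side functions
  set F : ℝ × ℝ × ℝ → ℝ := fun y => f (e3.symm y) with hFdef
  set F' : ℝ × ℝ × ℝ → ℝ := fun y => pd 0 f (e3.symm y) with hF'def
  set G : ℝ × ℝ × ℝ → ℝ := fun y => g (e3.symm y) with hGdef
  set H : ℝ × ℝ × ℝ → ℝ := fun y => h (e3.symm y) with hHdef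
  set Φg : ℝ × ℝ × ℝ → ℝ := fun z => g (e3.symm (σg z)) with hΦgdef
  set Φg' : ℝ × ℝ × ℝ → ℝ := fun z => pd 1 g (e3.symm (σg z)) with hΦg'def
  set Φh : ℝ × ℝ × ℝ → ℝ := fun z => h (e3.symm (σh z)) with hΦhdef
  set Φh' : ℝ × ℝ × ℝ → ℝ := fun z => pd 2 h (e3.symm (σh z)) with hΦh'def
  have hFm : Measurable F := hfm.comp hesm
  have hF'm : Measurable F' := (hpdm 0 f).comp hesm
  have hGm : Measurable Φg := hgm.comp (hesm.comp σg.measurable)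
  have hG'm : Measurable Φg' := (hpdm 1 g).comp (hesm.comp σg.measurable)
  have hHm : Measurable Φh := hhm.comp (hesm.comp σh.measurable)
  have hH'm : Measurable Φh' := (hpdm 2 h).comp (hesm.comp σh.measurable)
  -- lintegral transfer
  have tr : ∀ ψ : (Fin 3 → ℝ) → ℝ≥0∞, ∫⁻ y : ℝ × ℝ × ℝ, ψ (e3.symm y) = ∫⁻ x, ψ x :=
    fun ψ => (e3_mp.symm e3).lintegral_comp_emb e3.symm.measurableEmbedding ψ
  have trg : ∀ ψ : (Fin 3 → ℝ) → ℝ≥0∞, ∫⁻ z : ℝ × ℝ × ℝ, ψ (e3.symm (σg z)) = ∫⁻ x, ψ x := by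
    intro ψ
    rw [σg_mp.lintegral_comp_emb σg.measurableEmbedding (fun y => ψ (e3.symm y))]
    exact tr ψ
  have trh : ∀ ψ : (Fin 3 → ℝ) → ℝ≥0∞, ∫⁻ z : ℝ × ℝ × ℝ, ψ (e3.symm (σh z)) = ∫⁻ x, ψ x := by
    intro ψ
    rw [σh_mp.lintegral_comp_emb σh.measurableEmbedding (fun y => ψ (e3.symm y))]
    exact tr ψ
  -- square-integral finiteness on prod side
  have hF2 : ∫⁻ y, (‖F y‖₊ : ℝ≥0∞) ^ (2:ℝ) ≠ ∞ := by
    rw [hFdef]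
    rw [tr (fun x => (‖f x‖₊ : ℝ≥0∞) ^ (2:ℝ))]
    exact lint_sq_ne_top hf
  have hF'2 : ∫⁻ y, (‖F' y‖₊ : ℝ≥0∞) ^ (2:ℝ) ≠ ∞ := by
    rw [hF'def, tr (fun x => (‖pd 0 f x‖₊ : ℝ≥0∞) ^ (2:ℝ))]
    exact lint_sq_ne_top hf1
  have hG2 : ∫⁻ y, (‖Φg y‖₊ : ℝ≥0∞) ^ (2:ℝ) ≠ ∞ := by
    rw [hΦgdef, trg (fun x => (‖g x‖₊ : ℝ≥0∞) ^ (2:ℝ))]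
    exact lint_sq_ne_top hg
  have hG'2 : ∫⁻ y, (‖Φg' y‖₊ : ℝ≥0∞) ^ (2:ℝ) ≠ ∞ := by
    rw [hΦg'def, trg (fun x => (‖pd 1 g x‖₊ : ℝ≥0∞) ^ (2:ℝ))]
    exact lint_sq_ne_top hg2
  have hH2 : ∫⁻ y, (‖Φh y‖₊ : ℝ≥0∞) ^ (2:ℝ) ≠ ∞ := by
    rw [hΦhdef, trh (fun x => (‖h x‖₊ : ℝ≥0∞) ^ (2:ℝ))]
    exact lint_sq_ne_top hh
  have hH'2 : ∫⁻ y, (‖Φh' y‖₊ : ℝ≥0∞) ^ (2:ℝ) ≠ ∞ := by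
    rw [hΦh'def, trh (fun x => (‖pd 2 h x‖₊ : ℝ≥0∞) ^ (2:ℝ))]
    exact lint_sq_ne_top hh3
  -- derivative hypotheses
  have hderF : ∀ b c a : ℝ, HasDerivAt (fun t => F (t, b, c)) (F' (a, b, c)) a := by
    intro b c a
    have e1 : ∀ t : ℝ, e3.symm (t, b, c) = Function.update ![a, b, c] 0 t := by
      intro t; rw [e3_symm_apply]; funext j; fin_cases j <;> simp [Function.update]
    simp only [hFdef, hF'def, e1]
    exact hasDerivAt_coord f hfd 0 ![a, b, c] a
  have hderG : ∀ b c a : ℝ, HasDerivAt (fun t => Φg (t, b, c)) (Φg' (a, b, c)) a := by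
    intro b c a
    have e1 : ∀ t : ℝ, e3.symm (σg (t, b, c)) = Function.update ![b, a, c] 1 t := by
      intro t; rw [σg_apply, e3_symm_apply]; funext j; fin_cases j <;> simp [Function.update]
    simp only [hΦgdef, hΦg'def, e1]
    exact hasDerivAt_coord g hgd 1 ![b, a, c] a
  have hderH : ∀ b c a : ℝ, HasDerivAt (fun t => Φh (t, b, c)) (Φh' (a, b, c)) a := by
    intro b c a
    have e1 : ∀ t : ℝ, e3.symm (σh (t, b, c)) = Function.update ![b, c, a] 2 t := by
      intro t; rw [σh_apply, e3_symm_apply]; funext j; fin_cases j <;> simp [Function.update]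
    simp only [hΦhdef, hΦh'def, e1]
    exact hasDerivAt_coord h hhd 2 ![b, c, a] a
  -- grid-line functions
  set U : ℝ × ℝ → ℝ≥0∞ :=
    fun bc => ∫⁻ a, (‖F (a, bc.1, bc.2)‖₊ : ℝ≥0∞) * ‖F' (a, bc.1, bc.2)‖₊ with hUdef
  set V : ℝ × ℝ → ℝ≥0∞ :=
    fun bc => ∫⁻ a, (‖Φg (a, bc.1, bc.2)‖₊ : ℝ≥0∞) * ‖Φg' (a, bc.1, bc.2)‖₊ with hVdef
  set W : ℝ × ℝ → ℝ≥0∞ :=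
    fun bc => ∫⁻ a, (‖Φh (a, bc.1, bc.2)‖₊ : ℝ≥0∞) * ‖Φh' (a, bc.1, bc.2)‖₊ with hWdef
  obtain ⟨hUm, hUb⟩ := line_integral_package F F' hFm hF'm
  obtain ⟨hVm, hVb⟩ := line_integral_package Φg Φg' hGm hG'm
  obtain ⟨hWm, hWb⟩ := line_integral_package Φh Φh' hHm hH'm
  -- a.e. pointwise bounds
  have aef := slice_ae_bound F F' hFm hF'm hderF hF2 hF'2
  have aeg0 := slice_ae_bound Φg Φg' hGm hG'm hderG hG2 hG'2
  have aeh0 := slice_ae_bound Φh Φh' hHm hH'm hderH hH2 hH'2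
  have aeg := (σg_mp.symm σg).quasiMeasurePreserving.ae aeg0
  have aeh := (σh_mp.symm σh).quasiMeasurePreserving.ae aeh0
  -- combined pointwise bound
  have combined : ∀ᵐ y : ℝ × ℝ × ℝ, (‖F y * G y * H y‖₊ : ℝ≥0∞) ≤
      (2 * U (y.2.1, y.2.2)) ^ (1/2:ℝ) * (2 * V (y.1, y.2.2)) ^ (1/2:ℝ) *
        (2 * W (y.1, y.2.1)) ^ (1/2:ℝ) := by
    filter_upwards [aef, aeg, aeh] with y h1 h2 h3
    obtain ⟨a, b, c⟩ := y
    have hb1 : (‖F (a, b, c)‖₊ : ℝ≥0∞) ^ (2:ℝ) ≤ 2 * U (b, c) := h1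
    have hb2 : (‖G (a, b, c)‖₊ : ℝ≥0∞) ^ (2:ℝ) ≤ 2 * V (a, c) := by
      have := h2
      simp only [hΦgdef, MeasurableEquiv.apply_symm_apply] at this
      exact this
    have hb3 : (‖H (a, b, c)‖₊ : ℝ≥0∞) ^ (2:ℝ) ≤ 2 * W (a, b) := by
      have := h3
      simp only [hΦhdef, MeasurableEquiv.apply_symm_apply] at this
      exact this
    have sqrt_bound : ∀ (x : ℝ≥0∞) (A : ℝ≥0∞), x ^ (2:ℝ) ≤ A → x ≤ A ^ (1/2:ℝ) := by
      intro x A hx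
      have := ENNReal.rpow_le_rpow hx (by norm_num : (0:ℝ) ≤ 1/2)
      rwa [← ENNReal.rpow_mul, show (2:ℝ) * (1/2) = 1 by norm_num, ENNReal.rpow_one] at this
    calc (‖F (a,b,c) * G (a,b,c) * H (a,b,c)‖₊ : ℝ≥0∞)
        = (‖F (a,b,c)‖₊ : ℝ≥0∞) * ‖G (a,b,c)‖₊ * ‖H (a,b,c)‖₊ := by
          simp [nnnorm_mul]
      _ ≤ (2 * U (b, c)) ^ (1/2:ℝ) * (2 * V (a, c)) ^ (1/2:ℝ) * (2 * W (a, b)) ^ (1/2:ℝ) := by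
          exact mul_le_mul' (mul_le_mul' (sqrt_bound _ _ hb1) (sqrt_bound _ _ hb2))
            (sqrt_bound _ _ hb3)
  -- eLpNorm identifications
  have hNf : (∫⁻ y, (‖F y‖₊ : ℝ≥0∞) ^ (2:ℝ)) ^ (1/2:ℝ) = eLpNorm f 2 volume := by
    rw [hFdef, tr (fun x => (‖f x‖₊ : ℝ≥0∞) ^ (2:ℝ)), eLpNorm_two_eq]
  have hNf' : (∫⁻ y, (‖F' y‖₊ : ℝ≥0∞) ^ (2:ℝ)) ^ (1/2:ℝ) = eLpNorm (pd 0 f) 2 volume := by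
    rw [hF'def, tr (fun x => (‖pd 0 f x‖₊ : ℝ≥0∞) ^ (2:ℝ)), eLpNorm_two_eq]
  have hNg : (∫⁻ y, (‖Φg y‖₊ : ℝ≥0∞) ^ (2:ℝ)) ^ (1/2:ℝ) = eLpNorm g 2 volume := by
    rw [hΦgdef, trg (fun x => (‖g x‖₊ : ℝ≥0∞) ^ (2:ℝ)), eLpNorm_two_eq]
  have hNg' : (∫⁻ y, (‖Φg' y‖₊ : ℝ≥0∞) ^ (2:ℝ)) ^ (1/2:ℝ) = eLpNorm (pd 1 g) 2 volume := by
    rw [hΦg'def, trg (fun x => (‖pd 1 g x‖₊ : ℝ≥0∞) ^ (2:ℝ)), eLpNorm_two_eq]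
  have hNh : (∫⁻ y, (‖Φh y‖₊ : ℝ≥0∞) ^ (2:ℝ)) ^ (1/2:ℝ) = eLpNorm h 2 volume := by
    rw [hΦhdef, trh (fun x => (‖h x‖₊ : ℝ≥0∞) ^ (2:ℝ)), eLpNorm_two_eq]
  have hNh' : (∫⁻ y, (‖Φh' y‖₊ : ℝ≥0∞) ^ (2:ℝ)) ^ (1/2:ℝ) = eLpNorm (pd 2 h) 2 volume := by
    rw [hΦh'def, trh (fun x => (‖pd 2 h x‖₊ : ℝ≥0∞) ^ (2:ℝ)), eLpNorm_two_eq]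
  set Nf := eLpNorm f 2 volume
  set Nf' := eLpNorm (pd 0 f) 2 volume
  set Ng := eLpNorm g 2 volume
  set Ng' := eLpNorm (pd 1 g) 2 volume
  set Nh := eLpNorm h 2 volume
  set Nh' := eLpNorm (pd 2 h) 2 volume
  -- main lintegral bound
  have main : ∫⁻ y : ℝ × ℝ × ℝ, (‖F y * G y * H y‖₊ : ℝ≥0∞) ≤
      (2 * (Nf * Nf')) ^ (1/2:ℝ) * (2 * (Ng * Ng')) ^ (1/2:ℝ) * (2 * (Nh * Nh')) ^ (1/2:ℝ) := by
    calc ∫⁻ y : ℝ × ℝ × ℝ, (‖F y * G y * H y‖₊ : ℝ≥0∞)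
        ≤ ∫⁻ y : ℝ × ℝ × ℝ, (2 * U (y.2.1, y.2.2)) ^ (1/2:ℝ) *
            (2 * V (y.1, y.2.2)) ^ (1/2:ℝ) * (2 * W (y.1, y.2.1)) ^ (1/2:ℝ) :=
          lintegral_mono_ae combined
      _ ≤ (∫⁻ bc, 2 * U bc) ^ (1/2:ℝ) * (∫⁻ bc, 2 * V bc) ^ (1/2:ℝ) *
            (∫⁻ bc, 2 * W bc) ^ (1/2:ℝ) :=
          loomis_whitney (fun bc => 2 * U bc) (fun bc => 2 * V bc) (fun bc => 2 * W bc)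
            (hUm.const_mul 2) (hVm.const_mul 2) (hWm.const_mul 2)
      _ ≤ (2 * (Nf * Nf')) ^ (1/2:ℝ) * (2 * (Ng * Ng')) ^ (1/2:ℝ) *
            (2 * (Nh * Nh')) ^ (1/2:ℝ) := by
          have hU2 : ∫⁻ bc, 2 * U bc ≤ 2 * (Nf * Nf') := by
            rw [lintegral_const_mul _ hUm]
            gcongr
            rw [← hNf, ← hNf']
            exact hUb
          have hV2 : ∫⁻ bc, 2 * V bc ≤ 2 * (Ng * Ng') := by
            rw [lintegral_const_mul _ hVm]
            gcongr
            rw [← hNg, ← hNg']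
            exact hVb
          have hW2 : ∫⁻ bc, 2 * W bc ≤ 2 * (Nh * Nh') := by
            rw [lintegral_const_mul _ hWm]
            gcongr
            rw [← hNh, ← hNh']
            exact hWb
          gcongr
  -- finiteness of the bound
  have hfin : (2 * (Nf * Nf')) ^ (1/2:ℝ) * (2 * (Ng * Ng')) ^ (1/2:ℝ) *
      (2 * (Nh * Nh')) ^ (1/2:ℝ) ≠ ∞ := by
    have h1 : Nf ≠ ∞ := hf.eLpNorm_lt_top.ne
    have h2 : Nf' ≠ ∞ := hf1.eLpNorm_lt_top.ne
    have h3 : Ng ≠ ∞ := hg.eLpNorm_lt_top.ne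
    have h4 : Ng' ≠ ∞ := hg2.eLpNorm_lt_top.ne
    have h5 : Nh ≠ ∞ := hh.eLpNorm_lt_top.ne
    have h6 : Nh' ≠ ∞ := hh3.eLpNorm_lt_top.ne
    have fin : ∀ x : ℝ≥0∞, x ≠ ∞ → x ^ (1/2:ℝ) ≠ ∞ := fun x hx =>
      (ENNReal.rpow_lt_top_of_nonneg (by norm_num) hx).ne
    exact ENNReal.mul_ne_top (ENNReal.mul_ne_top
      (fin _ (ENNReal.mul_ne_top (by norm_num) (ENNReal.mul_ne_top h1 h2)))
      (fin _ (ENNReal.mul_ne_top (by norm_num) (ENNReal.mul_ne_top h3 h4))))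
      (fin _ (ENNReal.mul_ne_top (by norm_num) (ENNReal.mul_ne_top h5 h6)))
  -- Bochner integral to lintegral
  have habs : ∫ x, |f x * g x * h x| =
      (∫⁻ x, (‖f x * g x * h x‖₊ : ℝ≥0∞)).toReal := by
    rw [integral_eq_lintegral_of_nonneg_ae (f := fun x => |f x * g x * h x|) (Filter.Eventually.of_forall fun x => abs_nonneg _)
      ((hfm.mul hgm).mul hhm).abs.aestronglyMeasurable]
    congr 1
    refine lintegral_congr fun x => ?_
    rw [← Real.enorm_eq_ofReal (abs_nonneg _)]
    simp [Real.nnnorm_abs, enorm_eq_nnnorm]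
  have htrans : ∫⁻ x, (‖f x * g x * h x‖₊ : ℝ≥0∞) =
      ∫⁻ y : ℝ × ℝ × ℝ, (‖F y * G y * H y‖₊ : ℝ≥0∞) := by
    rw [hFdef, hGdef, hHdef, tr (fun x => (‖f x * g x * h x‖₊ : ℝ≥0∞))]
  rw [habs, htrans]
  -- conclude
  have hle := ENNReal.toReal_mono hfin main
  refine hle.trans (le_of_eq ?_)
  -- identify toReal of the bound with the RHS
  have hh2 : ((2:ℝ≥0∞)).toReal = (2:ℝ) := by simp
  rw [ENNReal.toReal_mul, ENNReal.toReal_mul, ← ENNReal.toReal_rpow, ← ENNReal.toReal_rpow,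
    ← ENNReal.toReal_rpow, ENNReal.toReal_mul, ENNReal.toReal_mul, ENNReal.toReal_mul,
    ENNReal.toReal_mul, ENNReal.toReal_mul, ENNReal.toReal_mul, hh2]
  have hL2 : Nf.toReal = L2 f ∧ Nf'.toReal = L2 (pd 0 f) ∧ Ng.toReal = L2 g ∧
      Ng'.toReal = L2 (pd 1 g) ∧ Nh.toReal = L2 h ∧ Nh'.toReal = L2 (pd 2 h) := by
    refine ⟨rfl, rfl, rfl, rfl, rfl, rfl⟩
  obtain ⟨e1, e2, e3', e4, e5, e6⟩ := hL2
  rw [e1, e2, e3', e4, e5, e6]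
  -- real arithmetic
  have n1 : (0:ℝ) ≤ L2 f := ENNReal.toReal_nonneg
  have n2 : (0:ℝ) ≤ L2 (pd 0 f) := ENNReal.toReal_nonneg
  have n3 : (0:ℝ) ≤ L2 g := ENNReal.toReal_nonneg
  have n4 : (0:ℝ) ≤ L2 (pd 1 g) := ENNReal.toReal_nonneg
  have n5 : (0:ℝ) ≤ L2 h := ENNReal.toReal_nonneg
  have n6 : (0:ℝ) ≤ L2 (pd 2 h) := ENNReal.toReal_nonneg
  rw [Real.mul_rpow (by norm_num) (mul_nonneg n1 n2),
    Real.mul_rpow (by norm_num) (mul_nonneg n3 n4),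
    Real.mul_rpow (by norm_num) (mul_nonneg n5 n6),
    Real.mul_rpow n1 n2, Real.mul_rpow n3 n4, Real.mul_rpow n5 n6]
  have h2pow : (2:ℝ) ^ (1/2:ℝ) * (2:ℝ) ^ (1/2:ℝ) * (2:ℝ) ^ (1/2:ℝ) = (2:ℝ) ^ ((3:ℝ)/2) := by
    rw [← Real.rpow_add (by norm_num), ← Real.rpow_add (by norm_num)]
    norm_num
  calc (2:ℝ) ^ (1/2:ℝ) * (L2 f ^ (1/2:ℝ) * L2 (pd 0 f) ^ (1/2:ℝ)) *
        ((2:ℝ) ^ (1/2:ℝ) * (L2 g ^ (1/2:ℝ) * L2 (pd 1 g) ^ (1/2:ℝ))) *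
        ((2:ℝ) ^ (1/2:ℝ) * (L2 h ^ (1/2:ℝ) * L2 (pd 2 h) ^ (1/2:ℝ)))
      = ((2:ℝ) ^ (1/2:ℝ) * (2:ℝ) ^ (1/2:ℝ) * (2:ℝ) ^ (1/2:ℝ)) * L2 f ^ (1/2:ℝ) *
        L2 (pd 0 f) ^ (1/2:ℝ) * L2 g ^ (1/2:ℝ) * L2 (pd 1 g) ^ (1/2:ℝ) *
        L2 h ^ (1/2:ℝ) * L2 (pd 2 h) ^ (1/2:ℝ) := by ring
    _ = _ := by rw [h2pow]
end

section
/- For functions f, g, h, v on ℝ³, the integral ∫_{ℝ³} |f g h v| dx is bounded by a universal constant times ‖f‖_{L²}^{1/4} ‖∂₁f‖_{L²}^{1/4} ‖∂₂f‖_{L²}^{1/4} ‖∂₁∂₂f‖_{L²}^{1/4} · ‖g‖_{L²}^{1/4} ‖∂₁g‖_{L²}^{1/4} ‖∂₂g‖_{L²}^{1/4} ‖∂₁∂₂g‖_{L²}^{1/4} · ‖h‖_{L²}^{1/2} ‖∂₃h‖_{L²}^{1/2} · ‖v‖_{L²}^{1/2} ‖∂₃v‖_{L²}^{1/2}, whenever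 all norms on the right are finite. -/
open MeasureTheory

section Helpers
open Real Set
open scoped ENNReal NNReal
noncomputable section

/-- Cauchy-Schwarz for lintegral. -/
lemma cs2 {α : Type*} [MeasurableSpace α] (μ : Measure α) {A B : α → ℝ≥0∞}
    (hA : AEMeasurable A μ) (hB : AEMeasurable B μ) :
    ∫⁻ x, A x * B x ∂μ ≤ (∫⁻ x, A x ^ (2:ℝ) ∂μ) ^ ((1:ℝ)/2) * (∫⁻ x, B x ^ (2:ℝ) ∂μ) ^ ((1:ℝ)/2) := by
  have hconj : Real.HolderConjugate 2 2 := Real.HolderConjugate.two_two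
  simpa using ENNReal.lintegral_mul_le_Lp_mul_Lq μ hconj hA hB

lemma cs2' {α : Type*} [MeasurableSpace α] (μ : Measure α) {A B : α → ℝ≥0∞}
    (hA : AEMeasurable A μ) (hB : AEMeasurable B μ) :
    ∫⁻ x, (A x) ^ ((1:ℝ)/2) * (B x) ^ ((1:ℝ)/2) ∂μ ≤
      (∫⁻ x, A x ∂μ) ^ ((1:ℝ)/2) * (∫⁻ x, B x ∂μ) ^ ((1:ℝ)/2) := by
  have h := cs2 μ (hA.pow_const ((1:ℝ)/2)) (hB.pow_const ((1:ℝ)/2))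
  have e : ∀ z : ℝ≥0∞, (z ^ ((1:ℝ)/2)) ^ (2:ℝ) = z := by
    intro z; rw [← ENNReal.rpow_mul]; norm_num
  simp only [e] at h
  exact h

lemma sqrt_le_of_sq_le {x y : ℝ≥0∞} (h : x ^ (2:ℝ) ≤ y) : x ≤ y ^ ((1:ℝ)/2) := by
  calc x = (x ^ (2:ℝ)) ^ ((1:ℝ)/2) := by
        rw [← ENNReal.rpow_mul]; norm_num
    _ ≤ y ^ ((1:ℝ)/2) := ENNReal.rpow_le_rpow h (by norm_num)


lemma convQ (r : ℝ) : (‖r‖₊ : ℝ≥0∞) ^ (2:ℝ) = ENNReal.ofReal (r * r) := by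
  rw [show (2:ℝ) = ((2:ℕ):ℝ) by norm_num, ENNReal.rpow_natCast, pow_two,
    ← abs_mul_abs_self r, ENNReal.ofReal_mul (abs_nonneg r), ← Real.enorm_eq_ofReal_abs, enorm_eq_nnnorm]

lemma lineBound {u u' : ℝ → ℝ} (hder : ∀ t, HasDerivAt u (u' t) t)
    (hc' : Continuous u')
    (hfin : (∫⁻ t, (‖u t‖₊ : ℝ≥0∞) ^ (2:ℝ)) ≠ ∞) (x : ℝ) :
    (‖u x‖₊ : ℝ≥0∞) ^ (2:ℝ) ≤ 2 * ∫⁻ t, (‖u t‖₊ : ℝ≥0∞) * ‖u' t‖₊ := by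
  have hu : Continuous u := by
    rw [continuous_iff_continuousAt]; exact fun t => (hder t).continuousAt
  set J := ∫⁻ t, (‖u t‖₊ : ℝ≥0∞) * ‖u' t‖₊ with hJdef
  by_cases hJ : J = ∞
  · rw [hJ]; simp
  have hφc : Continuous fun t => u t * u' t := hu.mul hc'
  have hInt : Integrable (fun t => u t * u' t) := by
    refine ⟨hφc.aestronglyMeasurable, ?_⟩
    rw [hasFiniteIntegral_def]
    simpa [nnnorm_mul, ENNReal.coe_mul, enorm_mul, enorm_eq_nnnorm] using lt_top_iff_ne_top.2 hJ
  have hIntAbs : Integrable (fun t => |2 * (u t * u' t)|) := ((hInt.const_mul 2).abs)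
  have key : ∀ s : ℝ, u x * u x ≤ u s * u s + ∫ t, |2 * (u t * u' t)| := by
    intro s
    have hftc : ∫ t in s..x, (2 * (u t * u' t)) = u x * u x - u s * u s := by
      refine intervalIntegral.integral_eq_sub_of_hasDerivAt
        (f := fun t => u t * u t) (f' := fun t => 2 * (u t * u' t)) (fun t _ => ?_) ?_
      · have : HasDerivAt (fun t => u t * u t) (u' t * u t + u t * u' t) t := (hder t).mul (hder t); exact this.congr_deriv (by ring)
      · exact (continuous_const.mul hφc).intervalIntegrable _ _
    have h1 : u x * u x - u s * u s ≤ |∫ t in s..x, (2 * (u t * u' t))| := by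
      rw [hftc] at *; exact le_abs_self _
    have h2 : |∫ t in s..x, (2 * (u t * u' t))| ≤ ∫ t in Set.uIoc s x, |2 * (u t * u' t)| := by
      simpa only [Real.norm_eq_abs] using
        intervalIntegral.norm_integral_le_integral_norm_uIoc
          (f := fun t => 2 * (u t * u' t)) (a := s) (b := x) (μ := volume)
    have h3 : ∫ t in Set.uIoc s x, |2 * (u t * u' t)| ≤ ∫ t, |2 * (u t * u' t)| :=
      setIntegral_le_integral hIntAbs (Filter.Eventually.of_forall fun t => abs_nonneg _)
    linarith
  have eps : ∀ ε : ℝ, 0 < ε → ∃ s, u s * u s < ε := by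
    intro ε hε
    by_contra hcon
    push_neg at hcon
    have hge : ∀ t, ENNReal.ofReal ε ≤ (‖u t‖₊ : ℝ≥0∞) ^ (2:ℝ) := by
      intro t; rw [convQ]; exact ENNReal.ofReal_le_ofReal (hcon t)
    have hle : (∫⁻ t, ENNReal.ofReal ε) ≤ ∫⁻ t, (‖u t‖₊ : ℝ≥0∞) ^ (2:ℝ) := lintegral_mono hge
    rw [lintegral_const, Real.volume_univ,
      ENNReal.mul_top (ENNReal.ofReal_pos.mpr hε).ne'] at hle
    exact hfin (top_le_iff.mp hle)
  -- combine
  have habs : ∫ t, |2 * (u t * u' t)| = 2 * J.toReal := by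
    have h0 := integral_norm_eq_lintegral_enorm hφc.aestronglyMeasurable (μ := volume)
    simp only [Real.norm_eq_abs] at h0
    have h1 : ∀ t : ℝ, |2 * (u t * u' t)| = 2 * |u t * u' t| := by
      intro t; rw [abs_mul]; norm_num
    simp only [h1]
    rw [MeasureTheory.integral_const_mul, h0]
    congr 1
    simp [nnnorm_mul, ENNReal.coe_mul, hJdef, enorm_eq_nnnorm]
  have hle : u x * u x ≤ 2 * J.toReal := by
    refine le_of_forall_pos_le_add fun ε hε => ?_
    obtain ⟨s, hs⟩ := eps ε hε
    have := key s
    rw [habs] at this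
    linarith
  calc (‖u x‖₊ : ℝ≥0∞) ^ (2:ℝ) = ENNReal.ofReal (u x * u x) := convQ _
    _ ≤ ENNReal.ofReal (2 * J.toReal) := ENNReal.ofReal_le_ofReal hle
    _ = 2 * ENNReal.ofReal J.toReal := by
        rw [ENNReal.ofReal_mul (by norm_num)]; norm_num
    _ = 2 * J := by rw [ENNReal.ofReal_toReal hJ]




lemma cont_vec {α : Type*} [TopologicalSpace α] {x y z : α → ℝ}
    (hx : Continuous x) (hy : Continuous y) (hz : Continuous z) :
    Continuous fun a => ![x a, y a, z a] := by
  refine continuous_pi fun i => ?_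
  fin_cases i <;> simpa

lemma pd_contDiff {f : (Fin 3 → ℝ) → ℝ} {n : ℕ} (hf : ContDiff ℝ (n+1) f) (i : Fin 3) :
    ContDiff ℝ n (pd i f) := by
  have h1 : ContDiff ℝ n (fderiv ℝ f) := hf.fderiv_right (le_refl _)
  exact h1.clm_apply contDiff_const

lemma pd_cont {f : (Fin 3 → ℝ) → ℝ} (hf : ContDiff ℝ 1 f) (i : Fin 3) :
    Continuous (pd i f) := by
  have : ContDiff ℝ (0+1) f := by exact_mod_cast hf
  exact (pd_contDiff this i).continuous

lemma hasDerivAt_line {f : (Fin 3 → ℝ) → ℝ} (hf : ContDiff ℝ 1 f)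
    {m : ℝ → Fin 3 → ℝ} {i : Fin 3} (hm : ∀ t, HasDerivAt m (Pi.single i 1) t) (t : ℝ) :
    HasDerivAt (fun s => f (m s)) (pd i f (m t)) t := by
  have hfd : HasFDerivAt f (fderiv ℝ f (m t)) (m t) :=
    (hf.differentiable one_ne_zero).differentiableAt.hasFDerivAt
  exact hfd.comp_hasDerivAt t (hm t)

lemma line0 (b c : ℝ) (t : ℝ) :
    HasDerivAt (fun s : ℝ => ![s, b, c]) (Pi.single (0 : Fin 3) 1) t := by
  rw [hasDerivAt_pi]
  intro i
  fin_cases i <;> simp <;>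
    first
      | exact hasDerivAt_id t
      | exact hasDerivAt_const t _

lemma line1 (a c : ℝ) (t : ℝ) :
    HasDerivAt (fun s : ℝ => ![a, s, c]) (Pi.single (1 : Fin 3) 1) t := by
  rw [hasDerivAt_pi]
  intro i
  fin_cases i <;> simp <;>
    first
      | exact hasDerivAt_id t
      | exact hasDerivAt_const t _

lemma line2 (a b : ℝ) (t : ℝ) :
    HasDerivAt (fun s : ℝ => ![a, b, s]) (Pi.single (2 : Fin 3) 1) t := by
  rw [hasDerivAt_pi]
  intro i
  fin_cases i <;> simp <;>
    first
      | exact hasDerivAt_id t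
      | exact hasDerivAt_const t _


abbrev ψ3 : (Fin 3 → ℝ) ≃ᵐ ℝ × (ℝ × ℝ) :=
  (MeasurableEquiv.piFinSuccAbove (fun _ : Fin 3 => ℝ) 0).trans
    ((MeasurableEquiv.refl ℝ).prodCongr (MeasurableEquiv.finTwoArrow))

lemma ψ3_mp : MeasurePreserving ψ3 volume volume := by
  have h1 := measurePreserving_piFinSuccAbove (fun _ : Fin 3 => (volume : Measure ℝ)) 0
  have h2 : MeasurePreserving (Prod.map (id : ℝ → ℝ) MeasurableEquiv.finTwoArrow)
      (volume.prod volume) (volume.prod volume) :=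
    (MeasurePreserving.id volume).prod (volume_preserving_finTwoArrow ℝ)
  exact h2.comp h1

lemma ψ3_apply (a b c : ℝ) : ψ3 ![a, b, c] = (a, (b, c)) := by
  have : ∀ x : Fin 3 → ℝ, ψ3 x = (x 0, (x 1, x 2)) := fun x => rfl
  rw [this]
  simp

lemma ψ3_symm_apply (a b c : ℝ) : ψ3.symm (a, (b, c)) = ![a, b, c] := by
  apply ψ3.injective
  rw [ψ3.apply_symm_apply, ψ3_apply]

/-- Base Fubini: order (a, b, c). -/
lemma fub_abc {G : (Fin 3 → ℝ) → ℝ≥0∞} (hG : Measurable G) :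
    ∫⁻ x, G x = ∫⁻ a, ∫⁻ b, ∫⁻ c, G ![a, b, c] := by
  have h0 : ∫⁻ p : ℝ × (ℝ × ℝ), G (ψ3.symm p) = ∫⁻ x, G x :=
    (ψ3_mp.symm ψ3).lintegral_comp hG
  have hGs : Measurable fun p : ℝ × (ℝ × ℝ) => G (ψ3.symm p) :=
    hG.comp ψ3.symm.measurable
  rw [← h0, MeasureTheory.Measure.volume_eq_prod, lintegral_prod _ hGs.aemeasurable]
  congr 1
  funext a
  have hGa : Measurable fun q : ℝ × ℝ => G (ψ3.symm (a, q)) :=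
    hGs.comp measurable_prodMk_left
  rw [MeasureTheory.Measure.volume_eq_prod, lintegral_prod _ hGa.aemeasurable]
  congr 1; funext b; congr 1; funext c
  rw [ψ3_symm_apply]

/-- swap two outer layers of an iterated triple lintegral -/
lemma swap_outer {K : ℝ → ℝ → ℝ≥0∞} (hK : Measurable (Function.uncurry K)) :
    ∫⁻ a, ∫⁻ b, K a b = ∫⁻ b, ∫⁻ a, K a b :=
  lintegral_lintegral_swap hK.aemeasurable


lemma meas_vec {α : Type*} [MeasurableSpace α] {x y z : α → ℝ}
    (hx : Measurable x) (hy : Measurable y) (hz : Measurable z) :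
    Measurable fun a => (![x a, y a, z a] : Fin 3 → ℝ) := by
  refine measurable_pi_lambda _ fun i => ?_
  fin_cases i <;> simpa

lemma fub_acb {G : (Fin 3 → ℝ) → ℝ≥0∞} (hG : Measurable G) :
    ∫⁻ x, G x = ∫⁻ a, ∫⁻ c, ∫⁻ b, G ![a, b, c] := by
  rw [fub_abc hG]
  congr 1; funext a
  exact swap_outer (hG.comp (meas_vec (measurable_const) measurable_fst measurable_snd))

lemma fub_cab {G : (Fin 3 → ℝ) → ℝ≥0∞} (hG : Measurable G) :
    ∫⁻ x, G x = ∫⁻ c, ∫⁻ a, ∫⁻ b, G ![a, b, c] := by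
  rw [fub_acb hG]
  exact swap_outer (Measurable.lintegral_prod_right
    (hG.comp (meas_vec (measurable_fst.comp measurable_fst) measurable_snd
      (measurable_snd.comp measurable_fst))))

lemma fub_cba {G : (Fin 3 → ℝ) → ℝ≥0∞} (hG : Measurable G) :
    ∫⁻ x, G x = ∫⁻ c, ∫⁻ b, ∫⁻ a, G ![a, b, c] := by
  rw [fub_cab hG]
  congr 1; funext c
  exact swap_outer (hG.comp (meas_vec measurable_fst measurable_snd measurable_const))

lemma fub_bac {G : (Fin 3 → ℝ) → ℝ≥0∞} (hG : Measurable G) :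
    ∫⁻ x, G x = ∫⁻ b, ∫⁻ a, ∫⁻ c, G ![a, b, c] := by
  rw [fub_abc hG]
  exact swap_outer (Measurable.lintegral_prod_right
    (hG.comp (meas_vec (measurable_fst.comp measurable_fst)
      (measurable_snd.comp measurable_fst) measurable_snd)))




def QQ (u : (Fin 3 → ℝ) → ℝ) (x : Fin 3 → ℝ) : ℝ≥0∞ := ‖u x‖₊

def TT (u w : (Fin 3 → ℝ) → ℝ) (a b : ℝ) : ℝ≥0∞ :=
  ∫⁻ c, QQ u ![a, b, c] * QQ w ![a, b, c]

def PP (u w : (Fin 3 → ℝ) → ℝ) (c : ℝ) : ℝ≥0∞ :=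
  ∫⁻ a, ∫⁻ b, QQ u ![a, b, c] * QQ w ![a, b, c]

lemma measQ {u : (Fin 3 → ℝ) → ℝ} (hu : Continuous u) {α : Type*} [MeasurableSpace α]
    {m : α → Fin 3 → ℝ} (hm : Measurable m) :
    Measurable fun p => QQ u (m p) :=
  (hu.measurable.comp hm).nnnorm.coe_nnreal_ennreal

lemma ae_to_all {ψ : ℝ → ℝ} (hψ : Continuous ψ) (hpos : ∀ b, 0 ≤ ψ b) {B : ℝ≥0∞}
    (h : ∀ᵐ b : ℝ, ENNReal.ofReal (ψ b) ≤ B) : ∀ b, ENNReal.ofReal (ψ b) ≤ B := by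
  intro b
  by_cases hB : B = ∞
  · simp [hB]
  have h' : ∀ᵐ b : ℝ, ψ b ≤ B.toReal := by
    filter_upwards [h] with b hb
    exact (ENNReal.ofReal_le_iff_le_toReal hB).mp hb
  have hd : Dense {b : ℝ | ψ b ≤ B.toReal} := (volume : Measure ℝ).dense_of_ae h'
  have hcl : IsClosed {b : ℝ | ψ b ≤ B.toReal} := isClosed_le hψ continuous_const
  have : {b : ℝ | ψ b ≤ B.toReal} = univ := by
    rw [← hcl.closure_eq, hd.closure_eq]
  have hb : ψ b ≤ B.toReal := by
    have : b ∈ {b : ℝ | ψ b ≤ B.toReal} := this ▸ mem_univ b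
    exact this
  exact (ENNReal.ofReal_le_iff_le_toReal hB).mpr hb


lemma vert {φ : (Fin 3 → ℝ) → ℝ} (hφ : ContDiff ℝ 1 φ)
    (h0 : (∫⁻ x, QQ φ x ^ (2:ℝ)) ≠ ∞) :
    ∀ᵐ b : ℝ, ∀ᵐ a : ℝ, ∀ c : ℝ,
      QQ φ ![a, b, c] ^ (2:ℝ) ≤ 2 * TT φ (pd 2 φ) a b := by
  have hφc : Continuous φ := hφ.continuous
  have hG : Measurable fun x => QQ φ x ^ (2:ℝ) :=
    (measQ hφc measurable_id).pow_const _
  have hfin : (∫⁻ b, ∫⁻ a, ∫⁻ c, QQ φ ![a,b,c] ^ (2:ℝ)) ≠ ∞ := by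
    rw [← fub_bac hG]; exact h0
  -- measurability of inner slices
  have hY : Measurable (Function.uncurry fun b a => ∫⁻ c, QQ φ ![a,b,c] ^ (2:ℝ)) := by
    apply Measurable.lintegral_prod_right
    exact ((measQ hφc (meas_vec (measurable_snd.comp measurable_fst)
      (measurable_fst.comp measurable_fst) measurable_snd)).pow_const _)
  have hX : Measurable fun b => ∫⁻ a, ∫⁻ c, QQ φ ![a,b,c] ^ (2:ℝ) :=
    Measurable.lintegral_prod_right hY
  have h1 : ∀ᵐ b : ℝ, (∫⁻ a, ∫⁻ c, QQ φ ![a,b,c] ^ (2:ℝ)) < ∞ := ae_lt_top hX hfin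
  filter_upwards [h1] with b hb
  have h2 : ∀ᵐ a : ℝ, (∫⁻ c, QQ φ ![a,b,c] ^ (2:ℝ)) < ∞ := by
    refine ae_lt_top ?_ hb.ne
    exact Measurable.lintegral_prod_right ((measQ hφc (meas_vec measurable_fst
      measurable_const measurable_snd)).pow_const _)
  filter_upwards [h2] with a ha
  intro c
  have hder : ∀ t : ℝ, HasDerivAt (fun s => φ ![a,b,s]) (pd 2 φ ![a,b,t]) t :=
    fun t => hasDerivAt_line hφ (line2 a b) t
  have hc' : Continuous fun t => pd 2 φ ![a,b,t] :=
    (pd_cont hφ 2).comp (cont_vec continuous_const continuous_const continuous_id)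
  have := lineBound hder hc' (by exact ha.ne) c
  exact this

lemma pd_pd {φ : (Fin 3 → ℝ) → ℝ} (hφ : ContDiff ℝ 2 φ) (i j : Fin 3) (x : Fin 3 → ℝ) :
    pd i (pd j φ) x = fderiv ℝ (fderiv ℝ φ) x (Pi.single i 1) (Pi.single j 1) := by
  have hdiff : DifferentiableAt ℝ (fderiv ℝ φ) x := by
    have h2 : ContDiff ℝ 1 (fderiv ℝ φ) := hφ.fderiv_right (le_refl _)
    exact (h2.differentiable one_ne_zero).differentiableAt
  show fderiv ℝ (fun y => (fderiv ℝ φ y) (Pi.single j 1)) x (Pi.single i 1) = _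
  rw [fderiv_clm_apply hdiff (differentiableAt_const _)]
  simp

lemma clairaut {φ : (Fin 3 → ℝ) → ℝ} (hφ : ContDiff ℝ 2 φ) :
    pd 1 (pd 0 φ) = pd 0 (pd 1 φ) := by
  funext x
  rw [pd_pd hφ, pd_pd hφ]
  exact (hφ.contDiffAt.isSymmSndFDerivAt (by simp)).eq _ _

lemma two_half (x y : ℝ≥0∞) :
    ((2:ℝ≥0∞) * x) ^ ((1:ℝ)/2) * ((2:ℝ≥0∞) * y) ^ ((1:ℝ)/2) =
      2 * (x ^ ((1:ℝ)/2) * y ^ ((1:ℝ)/2)) := by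
  rw [ENNReal.mul_rpow_of_nonneg _ _ (by norm_num), ENNReal.mul_rpow_of_nonneg _ _ (by norm_num)]
  have h2 : (2:ℝ≥0∞) ^ ((1:ℝ)/2) * (2:ℝ≥0∞) ^ ((1:ℝ)/2) = 2 := by
    rw [← ENNReal.rpow_add _ _ (by norm_num) (by norm_num)]
    norm_num
  calc (2:ℝ≥0∞) ^ ((1:ℝ)/2) * x ^ ((1:ℝ)/2) * ((2:ℝ≥0∞) ^ ((1:ℝ)/2) * y ^ ((1:ℝ)/2))
      = ((2:ℝ≥0∞) ^ ((1:ℝ)/2) * (2:ℝ≥0∞) ^ ((1:ℝ)/2)) * (x ^ ((1:ℝ)/2) * y ^ ((1:ℝ)/2)) := by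
        ring
    _ = 2 * (x ^ ((1:ℝ)/2) * y ^ ((1:ℝ)/2)) := by rw [h2]

lemma horiz {φ : (Fin 3 → ℝ) → ℝ} (hφ : ContDiff ℝ 2 φ)
    (h0 : (∫⁻ x, QQ φ x ^ (2:ℝ)) ≠ ∞) (h1 : (∫⁻ x, QQ (pd 0 φ) x ^ (2:ℝ)) ≠ ∞) :
    ∀ᵐ c : ℝ, ∀ a b : ℝ, QQ φ ![a,b,c] ^ (4:ℝ) ≤
      16 * PP φ (pd 1 φ) c * PP (pd 0 φ) (pd 1 (pd 0 φ)) c := by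
  have hφ1 : ContDiff ℝ 1 φ := hφ.of_le (by norm_num)
  have hφc : Continuous φ := hφ.continuous
  have hpd0 : ContDiff ℝ 1 (pd 0 φ) := pd_contDiff (by exact_mod_cast hφ) 0
  have hpd0c : Continuous (pd 0 φ) := hpd0.continuous
  have hpd1c : Continuous (pd 1 φ) := pd_cont hφ1 1
  have hpd10c : Continuous (pd 1 (pd 0 φ)) := pd_cont hpd0 1
  have hGφ : Measurable fun x => QQ φ x ^ (2:ℝ) := (measQ hφc measurable_id).pow_const _
  have hG0 : Measurable fun x => QQ (pd 0 φ) x ^ (2:ℝ) :=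
    (measQ hpd0c measurable_id).pow_const _
  -- A1 : a.e. c, a.e. b, ∫⁻ a < ∞
  have hA1 : ∀ᵐ c : ℝ, ∀ᵐ b : ℝ, (∫⁻ a, QQ φ ![a,b,c] ^ (2:ℝ)) < ∞ := by
    have hfin : (∫⁻ c, ∫⁻ b, ∫⁻ a, QQ φ ![a,b,c] ^ (2:ℝ)) ≠ ∞ := by
      rw [← fub_cba hGφ]; exact h0
    have hK : Measurable (Function.uncurry fun c b => ∫⁻ a, QQ φ ![a,b,c] ^ (2:ℝ)) :=
      Measurable.lintegral_prod_right ((measQ hφc (meas_vec measurable_snd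
        (measurable_snd.comp measurable_fst) (measurable_fst.comp measurable_fst))).pow_const _)
    have h' := ae_lt_top (Measurable.lintegral_prod_right hK) hfin
    filter_upwards [h'] with c hc
    refine ae_lt_top ?_ hc.ne
    exact Measurable.lintegral_prod_right ((measQ hφc (meas_vec measurable_snd
      measurable_fst measurable_const)).pow_const _)
  -- A2 : a.e. c, a.e. a, ∫⁻ b < ∞  (for φ)
  have hA2 : ∀ᵐ c : ℝ, ∀ᵐ a : ℝ, (∫⁻ b, QQ φ ![a,b,c] ^ (2:ℝ)) < ∞ := by
    have hfin : (∫⁻ c, ∫⁻ a, ∫⁻ b, QQ φ ![a,b,c] ^ (2:ℝ)) ≠ ∞ := by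
      rw [← fub_cab hGφ]; exact h0
    have hK : Measurable (Function.uncurry fun c a => ∫⁻ b, QQ φ ![a,b,c] ^ (2:ℝ)) :=
      Measurable.lintegral_prod_right ((measQ hφc (meas_vec
        (measurable_snd.comp measurable_fst) measurable_snd
        (measurable_fst.comp measurable_fst))).pow_const _)
    have h' := ae_lt_top (Measurable.lintegral_prod_right hK) hfin
    filter_upwards [h'] with c hc
    refine ae_lt_top ?_ hc.ne
    exact Measurable.lintegral_prod_right ((measQ hφc (meas_vec measurable_fst
      measurable_snd measurable_const)).pow_const _)
  -- A3 : same for pd 0 φ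
  have hA3 : ∀ᵐ c : ℝ, ∀ᵐ a : ℝ, (∫⁻ b, QQ (pd 0 φ) ![a,b,c] ^ (2:ℝ)) < ∞ := by
    have hfin : (∫⁻ c, ∫⁻ a, ∫⁻ b, QQ (pd 0 φ) ![a,b,c] ^ (2:ℝ)) ≠ ∞ := by
      rw [← fub_cab hG0]; exact h1
    have hK : Measurable (Function.uncurry fun c a => ∫⁻ b, QQ (pd 0 φ) ![a,b,c] ^ (2:ℝ)) :=
      Measurable.lintegral_prod_right ((measQ hpd0c (meas_vec
        (measurable_snd.comp measurable_fst) measurable_snd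
        (measurable_fst.comp measurable_fst))).pow_const _)
    have h' := ae_lt_top (Measurable.lintegral_prod_right hK) hfin
    filter_upwards [h'] with c hc
    refine ae_lt_top ?_ hc.ne
    exact Measurable.lintegral_prod_right ((measQ hpd0c (meas_vec measurable_fst
      measurable_snd measurable_const)).pow_const _)
  filter_upwards [hA1, hA2, hA3] with c hc1 hc2 hc3
  set P1 := PP φ (pd 1 φ) c with hP1def
  set P2 := PP (pd 0 φ) (pd 1 (pd 0 φ)) c with hP2def
  set X : ℝ → ℝ≥0∞ := fun t => ∫⁻ s, QQ φ ![t,s,c] * QQ (pd 1 φ) ![t,s,c] with hXdef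
  set Y : ℝ → ℝ≥0∞ :=
    fun t => ∫⁻ s, QQ (pd 0 φ) ![t,s,c] * QQ (pd 1 (pd 0 φ)) ![t,s,c] with hYdef
  have hXm : Measurable X := Measurable.lintegral_prod_right
    ((measQ hφc (meas_vec measurable_fst measurable_snd measurable_const)).mul
     (measQ hpd1c (meas_vec measurable_fst measurable_snd measurable_const)))
  have hYm : Measurable Y := Measurable.lintegral_prod_right
    ((measQ hpd0c (meas_vec measurable_fst measurable_snd measurable_const)).mul
     (measQ hpd10c (meas_vec measurable_fst measurable_snd measurable_const)))
  -- step 1 : pointwise sup bounds in direction 1 (a.e. t)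
  have hstep1 : ∀ᵐ t : ℝ, (∀ b', QQ φ ![t,b',c] ^ (2:ℝ) ≤ 2 * X t) ∧
      (∀ b', QQ (pd 0 φ) ![t,b',c] ^ (2:ℝ) ≤ 2 * Y t) := by
    filter_upwards [hc2, hc3] with t h2 h3
    constructor
    · intro b'
      exact lineBound (fun s => hasDerivAt_line hφ1 (line1 t c) s)
        ((pd_cont hφ1 1).comp (cont_vec continuous_const continuous_id continuous_const))
        h2.ne b'
    · intro b'
      exact lineBound (fun s => hasDerivAt_line hpd0 (line1 t c) s)
        ((pd_cont hpd0 1).comp (cont_vec continuous_const continuous_id continuous_const))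
        h3.ne b'
  -- step 2 : Φ b ≤ 2 √P1 √P2 for every b
  have hΦ : ∀ b : ℝ, (∫⁻ t, QQ φ ![t,b,c] * QQ (pd 0 φ) ![t,b,c]) ≤
      2 * (P1 ^ ((1:ℝ)/2) * P2 ^ ((1:ℝ)/2)) := by
    intro b
    have hmono : (∫⁻ t, QQ φ ![t,b,c] * QQ (pd 0 φ) ![t,b,c]) ≤
        ∫⁻ t, 2 * ((X t) ^ ((1:ℝ)/2) * (Y t) ^ ((1:ℝ)/2)) := by
      refine lintegral_mono_ae ?_
      filter_upwards [hstep1] with t ht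
      calc QQ φ ![t,b,c] * QQ (pd 0 φ) ![t,b,c]
          ≤ (2 * X t) ^ ((1:ℝ)/2) * (2 * Y t) ^ ((1:ℝ)/2) :=
            mul_le_mul' (sqrt_le_of_sq_le (ht.1 b)) (sqrt_le_of_sq_le (ht.2 b))
        _ = 2 * ((X t) ^ ((1:ℝ)/2) * (Y t) ^ ((1:ℝ)/2)) := two_half _ _
    refine hmono.trans ?_
    rw [lintegral_const_mul 2 (f := fun t => (X t) ^ ((1:ℝ)/2) * (Y t) ^ ((1:ℝ)/2)) ((hXm.pow_const _).mul (hYm.pow_const _))]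
    refine mul_le_mul_right ?_ 2
    exact cs2' volume hXm.aemeasurable hYm.aemeasurable
  -- step 3+4 : for all a b, QQ φ ^2 ≤ 4 √P1 √P2
  have hsup : ∀ a b : ℝ, QQ φ ![a,b,c] ^ (2:ℝ) ≤
      4 * (P1 ^ ((1:ℝ)/2) * P2 ^ ((1:ℝ)/2)) := by
    have hae : ∀ᵐ b : ℝ, ∀ a : ℝ, QQ φ ![a,b,c] ^ (2:ℝ) ≤
        4 * (P1 ^ ((1:ℝ)/2) * P2 ^ ((1:ℝ)/2)) := by
      filter_upwards [hc1] with b hb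
      intro a
      have hline := lineBound (fun t => hasDerivAt_line hφ1 (line0 b c) t)
        ((pd_cont hφ1 0).comp (cont_vec continuous_id continuous_const continuous_const))
        hb.ne a
      refine hline.trans ?_
      calc 2 * (∫⁻ t, QQ φ ![t,b,c] * QQ (pd 0 φ) ![t,b,c])
          ≤ 2 * (2 * (P1 ^ ((1:ℝ)/2) * P2 ^ ((1:ℝ)/2))) := mul_le_mul_right (hΦ b) 2
        _ = 4 * (P1 ^ ((1:ℝ)/2) * P2 ^ ((1:ℝ)/2)) := by ring
    intro a b
    have hψ : Continuous fun b => φ ![a,b,c] * φ ![a,b,c] :=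
      (hφc.comp (cont_vec continuous_const continuous_id continuous_const)).mul
      (hφc.comp (cont_vec continuous_const continuous_id continuous_const))
    have h := ae_to_all hψ (fun b => mul_self_nonneg _)
      (B := 4 * (P1 ^ ((1:ℝ)/2) * P2 ^ ((1:ℝ)/2))) ?_ b
    · rw [QQ, convQ]; exact h
    · filter_upwards [hae] with b hb
      rw [← convQ]; exact hb a
  -- step 5 : fourth power
  intro a b
  have h2 := hsup a b
  calc QQ φ ![a,b,c] ^ (4:ℝ) = (QQ φ ![a,b,c] ^ (2:ℝ)) ^ (2:ℝ) := by
        rw [← ENNReal.rpow_mul]; norm_num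
    _ ≤ (4 * (P1 ^ ((1:ℝ)/2) * P2 ^ ((1:ℝ)/2))) ^ (2:ℝ) :=
        ENNReal.rpow_le_rpow h2 (by norm_num)
    _ = 16 * P1 * P2 := by
        rw [ENNReal.mul_rpow_of_nonneg _ _ (by norm_num),
          ENNReal.mul_rpow_of_nonneg _ _ (by norm_num), ← ENNReal.rpow_mul,
          ← ENNReal.rpow_mul]
        norm_num
        ring


lemma root4_le_of_pow4_le {x y : ℝ≥0∞} (h : x ^ (4:ℝ) ≤ y) : x ≤ y ^ ((1:ℝ)/4) := by
  calc x = (x ^ (4:ℝ)) ^ ((1:ℝ)/4) := by rw [← ENNReal.rpow_mul]; norm_num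
    _ ≤ y ^ ((1:ℝ)/4) := ENNReal.rpow_le_rpow h (by norm_num)

lemma sixteen_half : (16:ℝ≥0∞) ^ ((1:ℝ)/2) = 4 := by
  rw [show (16:ℝ≥0∞) = 4 ^ (2:ℕ) by norm_num, ← ENNReal.rpow_natCast, ← ENNReal.rpow_mul]
  norm_num

lemma lint_sq (u : (Fin 3 → ℝ) → ℝ) :
    (∫⁻ x, QQ u x ^ (2:ℝ)) = (eLpNorm u 2 volume) ^ (2:ℝ) := by
  rw [MeasureTheory.eLpNorm_eq_lintegral_rpow_enorm_toReal two_ne_zero ENNReal.ofNat_ne_top,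
    ← ENNReal.rpow_mul]
  norm_num
  rfl

lemma J_le {u w : (Fin 3 → ℝ) → ℝ} (hu : Continuous u) (hw : Continuous w) :
    (∫⁻ x, QQ u x * QQ w x) ≤ eLpNorm u 2 volume * eLpNorm w 2 volume := by
  calc (∫⁻ x, QQ u x * QQ w x)
      ≤ (∫⁻ x, QQ u x ^ (2:ℝ)) ^ ((1:ℝ)/2) * (∫⁻ x, QQ w x ^ (2:ℝ)) ^ ((1:ℝ)/2) :=
        cs2 volume (measQ hu measurable_id).aemeasurable (measQ hw measurable_id).aemeasurable
    _ = eLpNorm u 2 volume * eLpNorm w 2 volume := by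
        rw [lint_sq, lint_sq, ← ENNReal.rpow_mul, ← ENNReal.rpow_mul]
        norm_num

lemma meas_PP {u w : (Fin 3 → ℝ) → ℝ} (hu : Continuous u) (hw : Continuous w) :
    Measurable fun c => PP u w c := by
  apply Measurable.lintegral_prod_right
  apply Measurable.lintegral_prod_right
  exact (measQ hu (meas_vec (measurable_snd.comp measurable_fst) measurable_snd
      (measurable_fst.comp measurable_fst))).mul
    (measQ hw (meas_vec (measurable_snd.comp measurable_fst) measurable_snd
      (measurable_fst.comp measurable_fst)))

lemma meas_TTp {u w : (Fin 3 → ℝ) → ℝ} (hu : Continuous u) (hw : Continuous w) :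
    Measurable fun p : ℝ × ℝ => TT u w p.2 p.1 := by
  apply Measurable.lintegral_prod_right
  exact (measQ hu (meas_vec (measurable_snd.comp measurable_fst)
      (measurable_fst.comp measurable_fst) measurable_snd)).mul
    (measQ hw (meas_vec (measurable_snd.comp measurable_fst)
      (measurable_fst.comp measurable_fst) measurable_snd))


lemma four_half : (4:ℝ≥0∞) ^ ((1:ℝ)/2) = 2 := by
  rw [show (4:ℝ≥0∞) = 2 ^ (2:ℕ) by norm_num, ← ENNReal.rpow_natCast, ← ENNReal.rpow_mul]
  norm_num

lemma alg1 (x y : ℝ≥0∞) :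
    (16 * x * y) ^ ((1:ℝ)/2) = 4 * (x ^ ((1:ℝ)/2) * y ^ ((1:ℝ)/2)) := by
  rw [ENNReal.mul_rpow_of_nonneg _ _ (by norm_num : (0:ℝ) ≤ 1/2),
    ENNReal.mul_rpow_of_nonneg _ _ (by norm_num : (0:ℝ) ≤ 1/2), sixteen_half]
  ring

lemma alg2 (x y : ℝ≥0∞) :
    (4 * (x * y)) ^ ((1:ℝ)/2) = 2 * (x ^ ((1:ℝ)/2) * y ^ ((1:ℝ)/2)) := by
  rw [ENNReal.mul_rpow_of_nonneg _ _ (by norm_num : (0:ℝ) ≤ 1/2),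
    ENNReal.mul_rpow_of_nonneg _ _ (by norm_num : (0:ℝ) ≤ 1/2), four_half]

lemma Epow_ne {u : (Fin 3 → ℝ) → ℝ} (hm : MemLp u 2 volume) {r : ℝ} (hr : 0 ≤ r) :
    eLpNorm u 2 volume ^ r ≠ ∞ :=
  ENNReal.rpow_ne_top_of_nonneg hr hm.eLpNorm_ne_top

end
end Helpers

open Real Set
open scoped ENNReal NNReal

/-- Anisotropic quadrilinear estimate. -/
theorem anisotropic_quadrilinear :
    ∃ C > 0, ∀ f g h v : (Fin 3 → ℝ) → ℝ,
      ContDiff ℝ 2 f → ContDiff ℝ 2 g → ContDiff ℝ 1 h → ContDiff ℝ 1 v →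
      MemLp f 2 volume → MemLp (pd 0 f) 2 volume → MemLp (pd 1 f) 2 volume →
      MemLp (pd 0 (pd 1 f)) 2 volume →
      MemLp g 2 volume → MemLp (pd 0 g) 2 volume → MemLp (pd 1 g) 2 volume →
      MemLp (pd 0 (pd 1 g)) 2 volume →
      MemLp h 2 volume → MemLp (pd 2 h) 2 volume →
      MemLp v 2 volume → MemLp (pd 2 v) 2 volume →
      ∫ x, |f x * g x * h x * v x| ≤
        C * L2 f ^ ((1:ℝ)/4) * L2 (pd 0 f) ^ ((1:ℝ)/4) * L2 (pd 1 f) ^ ((1:ℝ)/4) *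
          L2 (pd 0 (pd 1 f)) ^ ((1:ℝ)/4) *
          L2 g ^ ((1:ℝ)/4) * L2 (pd 0 g) ^ ((1:ℝ)/4) * L2 (pd 1 g) ^ ((1:ℝ)/4) *
          L2 (pd 0 (pd 1 g)) ^ ((1:ℝ)/4) *
          L2 h ^ ((1:ℝ)/2) * L2 (pd 2 h) ^ ((1:ℝ)/2) *
          L2 v ^ ((1:ℝ)/2) * L2 (pd 2 v) ^ ((1:ℝ)/2) := by
  refine ⟨8, by norm_num, ?_⟩
  intro f g h v hf hg hh hv hmf hmf0 hmf1 hmf01 hmg hmg0 hmg1 hmg01 hmh hmh2 hmv hmv2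
  -- continuity
  have hf1 : ContDiff ℝ 1 f := hf.of_le (by norm_num)
  have hg1 : ContDiff ℝ 1 g := hg.of_le (by norm_num)
  have hfc : Continuous f := hf.continuous
  have hgc : Continuous g := hg.continuous
  have hhc : Continuous h := hh.continuous
  have hvc : Continuous v := hv.continuous
  have hh2c : Continuous (pd 2 h) := pd_cont hh 2
  have hv2c : Continuous (pd 2 v) := pd_cont hv 2
  have hf0 : ContDiff ℝ 1 (pd 0 f) := pd_contDiff (by exact_mod_cast hf) 0
  have hg0 : ContDiff ℝ 1 (pd 0 g) := pd_contDiff (by exact_mod_cast hg) 0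
  have hf1c : Continuous (pd 1 f) := pd_cont hf1 1
  have hg1c : Continuous (pd 1 g) := pd_cont hg1 1
  have hf0c : Continuous (pd 0 f) := hf0.continuous
  have hg0c : Continuous (pd 0 g) := hg0.continuous
  have hf01c : Continuous (pd 1 (pd 0 f)) := pd_cont hf0 1
  have hg01c : Continuous (pd 1 (pd 0 g)) := pd_cont hg0 1
  -- finiteness of square integrals
  have hNf : (∫⁻ x, QQ f x ^ (2:ℝ)) ≠ ∞ := by
    rw [lint_sq]; exact Epow_ne hmf (by norm_num)
  have hNf0 : (∫⁻ x, QQ (pd 0 f) x ^ (2:ℝ)) ≠ ∞ := by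
    rw [lint_sq]; exact Epow_ne hmf0 (by norm_num)
  have hNg : (∫⁻ x, QQ g x ^ (2:ℝ)) ≠ ∞ := by
    rw [lint_sq]; exact Epow_ne hmg (by norm_num)
  have hNg0 : (∫⁻ x, QQ (pd 0 g) x ^ (2:ℝ)) ≠ ∞ := by
    rw [lint_sq]; exact Epow_ne hmg0 (by norm_num)
  have hNh : (∫⁻ x, QQ h x ^ (2:ℝ)) ≠ ∞ := by
    rw [lint_sq]; exact Epow_ne hmh (by norm_num)
  have hNv : (∫⁻ x, QQ v x ^ (2:ℝ)) ≠ ∞ := by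
    rw [lint_sq]; exact Epow_ne hmv (by norm_num)
  -- the vertical factor
  have hTThp := meas_TTp hhc hh2c
  have hTTvp := meas_TTp hvc hv2c
  have hGh : Measurable fun x : Fin 3 → ℝ => QQ h x * QQ (pd 2 h) x :=
    (measQ hhc measurable_id).mul (measQ hh2c measurable_id)
  have hGv : Measurable fun x : Fin 3 → ℝ => QQ v x * QQ (pd 2 v) x :=
    (measQ hvc measurable_id).mul (measQ hv2c measurable_id)
  have hJh_eq : (∫⁻ b, ∫⁻ a, TT h (pd 2 h) a b) = ∫⁻ x, QQ h x * QQ (pd 2 h) x := by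
    rw [fub_bac hGh]; rfl
  have hJv_eq : (∫⁻ b, ∫⁻ a, TT v (pd 2 v) a b) = ∫⁻ x, QQ v x * QQ (pd 2 v) x := by
    rw [fub_bac hGv]; rfl
  have hW : ∀ c : ℝ, (∫⁻ b, ∫⁻ a, QQ h ![a,b,c] * QQ v ![a,b,c]) ≤
      2 * ((∫⁻ x, QQ h x * QQ (pd 2 h) x) ^ ((1:ℝ)/2) *
           (∫⁻ x, QQ v x * QQ (pd 2 v) x) ^ ((1:ℝ)/2)) := by
    intro c
    have step1 : (∫⁻ b, ∫⁻ a, QQ h ![a,b,c] * QQ v ![a,b,c]) ≤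
        ∫⁻ b, ∫⁻ a, 2 * ((TT h (pd 2 h) a b) ^ ((1:ℝ)/2) * (TT v (pd 2 v) a b) ^ ((1:ℝ)/2)) := by
      refine lintegral_mono_ae ?_
      filter_upwards [vert hh hNh, vert hv hNv] with b hb1 hb2
      refine lintegral_mono_ae ?_
      filter_upwards [hb1, hb2] with a ha1 ha2
      calc QQ h ![a,b,c] * QQ v ![a,b,c]
          ≤ (2 * TT h (pd 2 h) a b) ^ ((1:ℝ)/2) * (2 * TT v (pd 2 v) a b) ^ ((1:ℝ)/2) :=
            mul_le_mul' (sqrt_le_of_sq_le (ha1 c)) (sqrt_le_of_sq_le (ha2 c))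
        _ = 2 * ((TT h (pd 2 h) a b) ^ ((1:ℝ)/2) * (TT v (pd 2 v) a b) ^ ((1:ℝ)/2)) :=
            two_half _ _
    refine step1.trans ?_
    have heq : ∀ b : ℝ,
        (∫⁻ a, 2 * ((TT h (pd 2 h) a b) ^ ((1:ℝ)/2) * (TT v (pd 2 v) a b) ^ ((1:ℝ)/2)))
        = 2 * ∫⁻ a, (TT h (pd 2 h) a b) ^ ((1:ℝ)/2) * (TT v (pd 2 v) a b) ^ ((1:ℝ)/2) := by
      intro b
      exact lintegral_const_mul 2 (((hTThp.comp measurable_prodMk_left).pow_const _).mul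
        ((hTTvp.comp measurable_prodMk_left).pow_const _))
    calc (∫⁻ b, ∫⁻ a, 2 * ((TT h (pd 2 h) a b) ^ ((1:ℝ)/2) * (TT v (pd 2 v) a b) ^ ((1:ℝ)/2)))
        = ∫⁻ b, 2 * ∫⁻ a, (TT h (pd 2 h) a b) ^ ((1:ℝ)/2) * (TT v (pd 2 v) a b) ^ ((1:ℝ)/2) :=
          lintegral_congr heq
      _ = 2 * ∫⁻ b, ∫⁻ a, (TT h (pd 2 h) a b) ^ ((1:ℝ)/2) * (TT v (pd 2 v) a b) ^ ((1:ℝ)/2) :=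
          lintegral_const_mul 2 (Measurable.lintegral_prod_right
            ((hTThp.pow_const _).mul (hTTvp.pow_const _)))
      _ ≤ 2 * ((∫⁻ b, ∫⁻ a, TT h (pd 2 h) a b) ^ ((1:ℝ)/2) *
               (∫⁻ b, ∫⁻ a, TT v (pd 2 v) a b) ^ ((1:ℝ)/2)) := by
          refine mul_le_mul_right ?_ 2
          calc (∫⁻ b, ∫⁻ a, (TT h (pd 2 h) a b) ^ ((1:ℝ)/2) * (TT v (pd 2 v) a b) ^ ((1:ℝ)/2))
              ≤ ∫⁻ b, (∫⁻ a, TT h (pd 2 h) a b) ^ ((1:ℝ)/2) *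
                  (∫⁻ a, TT v (pd 2 v) a b) ^ ((1:ℝ)/2) :=
                lintegral_mono fun b => cs2' volume
                  (hTThp.comp measurable_prodMk_left).aemeasurable
                  (hTTvp.comp measurable_prodMk_left).aemeasurable
            _ ≤ _ := cs2' volume
                  (Measurable.lintegral_prod_right
                    (f := fun b a => TT h (pd 2 h) a b) hTThp).aemeasurable
                  (Measurable.lintegral_prod_right
                    (f := fun b a => TT v (pd 2 v) a b) hTTvp).aemeasurable
      _ = 2 * ((∫⁻ x, QQ h x * QQ (pd 2 h) x) ^ ((1:ℝ)/2) *
               (∫⁻ x, QQ v x * QQ (pd 2 v) x) ^ ((1:ℝ)/2)) := by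
          rw [hJh_eq, hJv_eq]
  -- horizontal pointwise bound, a.e. in c
  have hcore : ∀ᵐ c : ℝ,
      (∫⁻ b, ∫⁻ a, QQ f ![a,b,c] * QQ g ![a,b,c] * QQ h ![a,b,c] * QQ v ![a,b,c]) ≤
      ((16 * PP f (pd 1 f) c * PP (pd 0 f) (pd 1 (pd 0 f)) c) ^ ((1:ℝ)/4) *
       (16 * PP g (pd 1 g) c * PP (pd 0 g) (pd 1 (pd 0 g)) c) ^ ((1:ℝ)/4)) *
      (2 * ((∫⁻ x, QQ h x * QQ (pd 2 h) x) ^ ((1:ℝ)/2) *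
            (∫⁻ x, QQ v x * QQ (pd 2 v) x) ^ ((1:ℝ)/2))) := by
    filter_upwards [horiz hf hNf hNf0, horiz hg hNg hNg0] with c hcf hcg
    set Bf := (16 * PP f (pd 1 f) c * PP (pd 0 f) (pd 1 (pd 0 f)) c) ^ ((1:ℝ)/4) with hBf
    set Bg := (16 * PP g (pd 1 g) c * PP (pd 0 g) (pd 1 (pd 0 g)) c) ^ ((1:ℝ)/4) with hBg
    have hmhv_a : ∀ b : ℝ, Measurable fun a => QQ h ![a,b,c] * QQ v ![a,b,c] := fun b =>
      (measQ hhc (meas_vec measurable_id measurable_const measurable_const)).mul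
      (measQ hvc (meas_vec measurable_id measurable_const measurable_const))
    have hmhv_b : Measurable fun b => ∫⁻ a, QQ h ![a,b,c] * QQ v ![a,b,c] :=
      Measurable.lintegral_prod_right (f := fun b a => QQ h ![a,b,c] * QQ v ![a,b,c])
        ((measQ hhc (meas_vec measurable_snd measurable_fst measurable_const)).mul
         (measQ hvc (meas_vec measurable_snd measurable_fst measurable_const)))
    calc (∫⁻ b, ∫⁻ a, QQ f ![a,b,c] * QQ g ![a,b,c] * QQ h ![a,b,c] * QQ v ![a,b,c])
        ≤ ∫⁻ b, ∫⁻ a, (Bf * Bg) * (QQ h ![a,b,c] * QQ v ![a,b,c]) := by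
          refine lintegral_mono fun b => lintegral_mono fun a => ?_
          have h1 : QQ f ![a,b,c] ≤ Bf := root4_le_of_pow4_le (hcf a b)
          have h2 : QQ g ![a,b,c] ≤ Bg := root4_le_of_pow4_le (hcg a b)
          calc QQ f ![a,b,c] * QQ g ![a,b,c] * QQ h ![a,b,c] * QQ v ![a,b,c]
              = (QQ f ![a,b,c] * QQ g ![a,b,c]) * (QQ h ![a,b,c] * QQ v ![a,b,c]) := by
                ring
            _ ≤ (Bf * Bg) * (QQ h ![a,b,c] * QQ v ![a,b,c]) :=
                mul_le_mul' (mul_le_mul' h1 h2) le_rfl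
      _ = (Bf * Bg) * ∫⁻ b, ∫⁻ a, QQ h ![a,b,c] * QQ v ![a,b,c] := by
          rw [← lintegral_const_mul _ hmhv_b]
          exact lintegral_congr fun b => lintegral_const_mul _ (hmhv_a b)
      _ ≤ _ := mul_le_mul_right (hW c) _
  -- identification of the c-integrals of PP with space integrals
  have hGf1 : Measurable fun x : Fin 3 → ℝ => QQ f x * QQ (pd 1 f) x :=
    (measQ hfc measurable_id).mul (measQ hf1c measurable_id)
  have hGf0 : Measurable fun x : Fin 3 → ℝ => QQ (pd 0 f) x * QQ (pd 1 (pd 0 f)) x :=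
    (measQ hf0c measurable_id).mul (measQ hf01c measurable_id)
  have hGg1 : Measurable fun x : Fin 3 → ℝ => QQ g x * QQ (pd 1 g) x :=
    (measQ hgc measurable_id).mul (measQ hg1c measurable_id)
  have hGg0 : Measurable fun x : Fin 3 → ℝ => QQ (pd 0 g) x * QQ (pd 1 (pd 0 g)) x :=
    (measQ hg0c measurable_id).mul (measQ hg01c measurable_id)
  have hPf1 : (∫⁻ c, PP f (pd 1 f) c) = ∫⁻ x, QQ f x * QQ (pd 1 f) x := by
    rw [fub_cab hGf1]; rfl
  have hPf0 : (∫⁻ c, PP (pd 0 f) (pd 1 (pd 0 f)) c)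
      = ∫⁻ x, QQ (pd 0 f) x * QQ (pd 1 (pd 0 f)) x := by
    rw [fub_cab hGf0]; rfl
  have hPg1 : (∫⁻ c, PP g (pd 1 g) c) = ∫⁻ x, QQ g x * QQ (pd 1 g) x := by
    rw [fub_cab hGg1]; rfl
  have hPg0 : (∫⁻ c, PP (pd 0 g) (pd 1 (pd 0 g)) c)
      = ∫⁻ x, QQ (pd 0 g) x * QQ (pd 1 (pd 0 g)) x := by
    rw [fub_cab hGg0]; rfl
  -- Hölder in c for the horizontal factors
  have hA1m : Measurable fun c => 16 * PP f (pd 1 f) c * PP (pd 0 f) (pd 1 (pd 0 f)) c :=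
    (measurable_const.mul (meas_PP hfc hf1c)).mul (meas_PP hf0c hf01c)
  have hA2m : Measurable fun c => 16 * PP g (pd 1 g) c * PP (pd 0 g) (pd 1 (pd 0 g)) c :=
    (measurable_const.mul (meas_PP hgc hg1c)).mul (meas_PP hg0c hg01c)
  have halfint : ∀ (P1 P2 : ℝ → ℝ≥0∞), Measurable P1 → Measurable P2 →
      (∫⁻ c, (16 * P1 c * P2 c) ^ ((1:ℝ)/2)) ≤
      4 * ((∫⁻ c, P1 c) ^ ((1:ℝ)/2) * (∫⁻ c, P2 c) ^ ((1:ℝ)/2)) := by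
    intro P1 P2 h1 h2
    calc (∫⁻ c, (16 * P1 c * P2 c) ^ ((1:ℝ)/2))
        = ∫⁻ c, 4 * ((P1 c) ^ ((1:ℝ)/2) * (P2 c) ^ ((1:ℝ)/2)) := by
          exact lintegral_congr fun c => alg1 _ _
      _ = 4 * ∫⁻ c, (P1 c) ^ ((1:ℝ)/2) * (P2 c) ^ ((1:ℝ)/2) :=
          lintegral_const_mul 4 ((h1.pow_const _).mul (h2.pow_const _))
      _ ≤ 4 * ((∫⁻ c, P1 c) ^ ((1:ℝ)/2) * (∫⁻ c, P2 c) ^ ((1:ℝ)/2)) :=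
          mul_le_mul_right (cs2' volume h1.aemeasurable h2.aemeasurable) _
  have hintBfBg : (∫⁻ c, (16 * PP f (pd 1 f) c * PP (pd 0 f) (pd 1 (pd 0 f)) c) ^ ((1:ℝ)/4) *
        (16 * PP g (pd 1 g) c * PP (pd 0 g) (pd 1 (pd 0 g)) c) ^ ((1:ℝ)/4)) ≤
      4 * (((∫⁻ x, QQ f x * QQ (pd 1 f) x) ^ ((1:ℝ)/4) *
            (∫⁻ x, QQ (pd 0 f) x * QQ (pd 1 (pd 0 f)) x) ^ ((1:ℝ)/4)) *
           ((∫⁻ x, QQ g x * QQ (pd 1 g) x) ^ ((1:ℝ)/4) *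
            (∫⁻ x, QQ (pd 0 g) x * QQ (pd 1 (pd 0 g)) x) ^ ((1:ℝ)/4))) := by
    have hq : ∀ z : ℝ≥0∞, z ^ ((1:ℝ)/4) = (z ^ ((1:ℝ)/2)) ^ ((1:ℝ)/2) := by
      intro z; rw [← ENNReal.rpow_mul]; norm_num
    calc (∫⁻ c, (16 * PP f (pd 1 f) c * PP (pd 0 f) (pd 1 (pd 0 f)) c) ^ ((1:ℝ)/4) *
          (16 * PP g (pd 1 g) c * PP (pd 0 g) (pd 1 (pd 0 g)) c) ^ ((1:ℝ)/4))
        = ∫⁻ c, ((16 * PP f (pd 1 f) c * PP (pd 0 f) (pd 1 (pd 0 f)) c) ^ ((1:ℝ)/2)) ^ ((1:ℝ)/2) *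
            ((16 * PP g (pd 1 g) c * PP (pd 0 g) (pd 1 (pd 0 g)) c) ^ ((1:ℝ)/2)) ^ ((1:ℝ)/2) := by
          exact lintegral_congr fun c => by rw [← hq, ← hq]
      _ ≤ (∫⁻ c, (16 * PP f (pd 1 f) c * PP (pd 0 f) (pd 1 (pd 0 f)) c) ^ ((1:ℝ)/2)) ^ ((1:ℝ)/2) *
          (∫⁻ c, (16 * PP g (pd 1 g) c * PP (pd 0 g) (pd 1 (pd 0 g)) c) ^ ((1:ℝ)/2)) ^ ((1:ℝ)/2) :=
          cs2' volume (hA1m.pow_const _).aemeasurable (hA2m.pow_const _).aemeasurable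
      _ ≤ (4 * ((∫⁻ c, PP f (pd 1 f) c) ^ ((1:ℝ)/2) *
              (∫⁻ c, PP (pd 0 f) (pd 1 (pd 0 f)) c) ^ ((1:ℝ)/2))) ^ ((1:ℝ)/2) *
          (4 * ((∫⁻ c, PP g (pd 1 g) c) ^ ((1:ℝ)/2) *
              (∫⁻ c, PP (pd 0 g) (pd 1 (pd 0 g)) c) ^ ((1:ℝ)/2))) ^ ((1:ℝ)/2) :=
          mul_le_mul' (ENNReal.rpow_le_rpow (halfint _ _ (meas_PP hfc hf1c)
              (meas_PP hf0c hf01c)) (by norm_num))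
            (ENNReal.rpow_le_rpow (halfint _ _ (meas_PP hgc hg1c)
              (meas_PP hg0c hg01c)) (by norm_num))
      _ = 4 * (((∫⁻ c, PP f (pd 1 f) c) ^ ((1:ℝ)/4) *
            (∫⁻ c, PP (pd 0 f) (pd 1 (pd 0 f)) c) ^ ((1:ℝ)/4)) *
           ((∫⁻ c, PP g (pd 1 g) c) ^ ((1:ℝ)/4) *
            (∫⁻ c, PP (pd 0 g) (pd 1 (pd 0 g)) c) ^ ((1:ℝ)/4))) := by
          rw [alg2, alg2, ← hq, ← hq, ← hq, ← hq]
          ring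
      _ = _ := by rw [hPf1, hPf0, hPg1, hPg0]
  -- the full chain in ℝ≥0∞
  have hPim : Measurable fun x : Fin 3 → ℝ => QQ f x * QQ g x * QQ h x * QQ v x :=
    (((measQ hfc measurable_id).mul (measQ hgc measurable_id)).mul
      (measQ hhc measurable_id)).mul (measQ hvc measurable_id)
  have hmBfBg : Measurable fun c =>
      (16 * PP f (pd 1 f) c * PP (pd 0 f) (pd 1 (pd 0 f)) c) ^ ((1:ℝ)/4) *
      (16 * PP g (pd 1 g) c * PP (pd 0 g) (pd 1 (pd 0 g)) c) ^ ((1:ℝ)/4) :=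
    (hA1m.pow_const _).mul (hA2m.pow_const _)
  have hchain : (∫⁻ x, QQ f x * QQ g x * QQ h x * QQ v x) ≤
      8 * eLpNorm f 2 volume ^ ((1:ℝ)/4) * eLpNorm (pd 0 f) 2 volume ^ ((1:ℝ)/4) *
        eLpNorm (pd 1 f) 2 volume ^ ((1:ℝ)/4) *
        eLpNorm (pd 0 (pd 1 f)) 2 volume ^ ((1:ℝ)/4) *
        eLpNorm g 2 volume ^ ((1:ℝ)/4) * eLpNorm (pd 0 g) 2 volume ^ ((1:ℝ)/4) *
        eLpNorm (pd 1 g) 2 volume ^ ((1:ℝ)/4) *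
        eLpNorm (pd 0 (pd 1 g)) 2 volume ^ ((1:ℝ)/4) *
        eLpNorm h 2 volume ^ ((1:ℝ)/2) * eLpNorm (pd 2 h) 2 volume ^ ((1:ℝ)/2) *
        eLpNorm v 2 volume ^ ((1:ℝ)/2) * eLpNorm (pd 2 v) 2 volume ^ ((1:ℝ)/2) := by
    calc (∫⁻ x, QQ f x * QQ g x * QQ h x * QQ v x)
        = ∫⁻ c, ∫⁻ b, ∫⁻ a, QQ f ![a,b,c] * QQ g ![a,b,c] * QQ h ![a,b,c] * QQ v ![a,b,c] :=
          fub_cba hPim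
      _ ≤ ∫⁻ c, ((16 * PP f (pd 1 f) c * PP (pd 0 f) (pd 1 (pd 0 f)) c) ^ ((1:ℝ)/4) *
            (16 * PP g (pd 1 g) c * PP (pd 0 g) (pd 1 (pd 0 g)) c) ^ ((1:ℝ)/4)) *
            (2 * ((∫⁻ x, QQ h x * QQ (pd 2 h) x) ^ ((1:ℝ)/2) *
                  (∫⁻ x, QQ v x * QQ (pd 2 v) x) ^ ((1:ℝ)/2))) := lintegral_mono_ae hcore
      _ = (∫⁻ c, (16 * PP f (pd 1 f) c * PP (pd 0 f) (pd 1 (pd 0 f)) c) ^ ((1:ℝ)/4) *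
            (16 * PP g (pd 1 g) c * PP (pd 0 g) (pd 1 (pd 0 g)) c) ^ ((1:ℝ)/4)) *
            (2 * ((∫⁻ x, QQ h x * QQ (pd 2 h) x) ^ ((1:ℝ)/2) *
                  (∫⁻ x, QQ v x * QQ (pd 2 v) x) ^ ((1:ℝ)/2))) :=
          lintegral_mul_const _ hmBfBg
      _ ≤ (4 * (((∫⁻ x, QQ f x * QQ (pd 1 f) x) ^ ((1:ℝ)/4) *
            (∫⁻ x, QQ (pd 0 f) x * QQ (pd 1 (pd 0 f)) x) ^ ((1:ℝ)/4)) *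
           ((∫⁻ x, QQ g x * QQ (pd 1 g) x) ^ ((1:ℝ)/4) *
            (∫⁻ x, QQ (pd 0 g) x * QQ (pd 1 (pd 0 g)) x) ^ ((1:ℝ)/4)))) *
            (2 * ((∫⁻ x, QQ h x * QQ (pd 2 h) x) ^ ((1:ℝ)/2) *
                  (∫⁻ x, QQ v x * QQ (pd 2 v) x) ^ ((1:ℝ)/2))) :=
          mul_le_mul_left hintBfBg _
      _ ≤ (4 * (((eLpNorm f 2 volume * eLpNorm (pd 1 f) 2 volume) ^ ((1:ℝ)/4) *
            (eLpNorm (pd 0 f) 2 volume * eLpNorm (pd 1 (pd 0 f)) 2 volume) ^ ((1:ℝ)/4)) *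
           ((eLpNorm g 2 volume * eLpNorm (pd 1 g) 2 volume) ^ ((1:ℝ)/4) *
            (eLpNorm (pd 0 g) 2 volume * eLpNorm (pd 1 (pd 0 g)) 2 volume) ^ ((1:ℝ)/4)))) *
            (2 * ((eLpNorm h 2 volume * eLpNorm (pd 2 h) 2 volume) ^ ((1:ℝ)/2) *
                  (eLpNorm v 2 volume * eLpNorm (pd 2 v) 2 volume) ^ ((1:ℝ)/2))) := by
          refine mul_le_mul' (mul_le_mul_right (mul_le_mul'
            (mul_le_mul' (ENNReal.rpow_le_rpow (J_le hfc hf1c) (by norm_num))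
              (ENNReal.rpow_le_rpow (J_le hf0c hf01c) (by norm_num)))
            (mul_le_mul' (ENNReal.rpow_le_rpow (J_le hgc hg1c) (by norm_num))
              (ENNReal.rpow_le_rpow (J_le hg0c hg01c) (by norm_num)))) 4)
            (mul_le_mul_right (mul_le_mul'
              (ENNReal.rpow_le_rpow (J_le hhc hh2c) (by norm_num))
              (ENNReal.rpow_le_rpow (J_le hvc hv2c) (by norm_num))) 2)
      _ = _ := by
          rw [clairaut hf, clairaut hg,
            ENNReal.mul_rpow_of_nonneg _ _ (by norm_num : (0:ℝ) ≤ 1/4),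
            ENNReal.mul_rpow_of_nonneg _ _ (by norm_num : (0:ℝ) ≤ 1/4),
            ENNReal.mul_rpow_of_nonneg _ _ (by norm_num : (0:ℝ) ≤ 1/4),
            ENNReal.mul_rpow_of_nonneg _ _ (by norm_num : (0:ℝ) ≤ 1/4),
            ENNReal.mul_rpow_of_nonneg _ _ (by norm_num : (0:ℝ) ≤ 1/2),
            ENNReal.mul_rpow_of_nonneg _ _ (by norm_num : (0:ℝ) ≤ 1/2)]
          ring
  -- finiteness of the right-hand side
  have hR_ne : (8 * eLpNorm f 2 volume ^ ((1:ℝ)/4) * eLpNorm (pd 0 f) 2 volume ^ ((1:ℝ)/4) *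
        eLpNorm (pd 1 f) 2 volume ^ ((1:ℝ)/4) *
        eLpNorm (pd 0 (pd 1 f)) 2 volume ^ ((1:ℝ)/4) *
        eLpNorm g 2 volume ^ ((1:ℝ)/4) * eLpNorm (pd 0 g) 2 volume ^ ((1:ℝ)/4) *
        eLpNorm (pd 1 g) 2 volume ^ ((1:ℝ)/4) *
        eLpNorm (pd 0 (pd 1 g)) 2 volume ^ ((1:ℝ)/4) *
        eLpNorm h 2 volume ^ ((1:ℝ)/2) * eLpNorm (pd 2 h) 2 volume ^ ((1:ℝ)/2) *
        eLpNorm v 2 volume ^ ((1:ℝ)/2) * eLpNorm (pd 2 v) 2 volume ^ ((1:ℝ)/2)) ≠ ∞ := by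
    repeat' apply ENNReal.mul_ne_top
    · simp
    · exact Epow_ne hmf (by norm_num)
    · exact Epow_ne hmf0 (by norm_num)
    · exact Epow_ne hmf1 (by norm_num)
    · exact Epow_ne hmf01 (by norm_num)
    · exact Epow_ne hmg (by norm_num)
    · exact Epow_ne hmg0 (by norm_num)
    · exact Epow_ne hmg1 (by norm_num)
    · exact Epow_ne hmg01 (by norm_num)
    · exact Epow_ne hmh (by norm_num)
    · exact Epow_ne hmh2 (by norm_num)
    · exact Epow_ne hmv (by norm_num)
    · exact Epow_ne hmv2 (by norm_num)
  -- identify the integral with the lintegral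
  have hint : (∫ x, |f x * g x * h x * v x|)
      = (∫⁻ x, QQ f x * QQ g x * QQ h x * QQ v x).toReal := by
    rw [integral_eq_lintegral_of_nonneg_ae (f := fun x => |f x * g x * h x * v x|) (Filter.Eventually.of_forall fun x => abs_nonneg _)
      ((((hfc.mul hgc).mul hhc).mul hvc).abs.aestronglyMeasurable :
        AEStronglyMeasurable (fun x => |f x * g x * h x * v x|) volume)]
    congr 1
    apply lintegral_congr
    intro x
    rw [← Real.enorm_eq_ofReal_abs]
    simp [QQ, nnnorm_mul, ENNReal.coe_mul, enorm_eq_nnnorm]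
  rw [hint]
  calc (∫⁻ x, QQ f x * QQ g x * QQ h x * QQ v x).toReal
      ≤ (8 * eLpNorm f 2 volume ^ ((1:ℝ)/4) * eLpNorm (pd 0 f) 2 volume ^ ((1:ℝ)/4) *
        eLpNorm (pd 1 f) 2 volume ^ ((1:ℝ)/4) *
        eLpNorm (pd 0 (pd 1 f)) 2 volume ^ ((1:ℝ)/4) *
        eLpNorm g 2 volume ^ ((1:ℝ)/4) * eLpNorm (pd 0 g) 2 volume ^ ((1:ℝ)/4) *
        eLpNorm (pd 1 g) 2 volume ^ ((1:ℝ)/4) *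
        eLpNorm (pd 0 (pd 1 g)) 2 volume ^ ((1:ℝ)/4) *
        eLpNorm h 2 volume ^ ((1:ℝ)/2) * eLpNorm (pd 2 h) 2 volume ^ ((1:ℝ)/2) *
        eLpNorm v 2 volume ^ ((1:ℝ)/2) * eLpNorm (pd 2 v) 2 volume ^ ((1:ℝ)/2)).toReal :=
        ENNReal.toReal_mono hR_ne hchain
    _ = _ := by
        simp only [ENNReal.toReal_mul, ← ENNReal.toReal_rpow, L2]
        norm_num
end

section
/- For a function f on ℝ³ with f, ∂₂f, ∂₁f, ∂₁∂₂f in L², the mixed norm ‖f‖_{L²_{x₃} L^∞_{x₁} L^∞_{x₂}} (L^∞ in x₂, then L^∞ in x₁, then L² in x₃) is bounded by 2^{3/2} ‖f‖_{L²}^{1/4} ‖∂₁f‖_{L²}^{1/4} ‖∂₂f‖_{L²}^{1/4} ‖∂₁∂₂f‖_{L²}^{1/4}. -/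
open MeasureTheory

/-- Partial derivative in the first coordinate on `ℝ³ = ℝ × ℝ × ℝ`. -/
noncomputable def d1 (f : ℝ × ℝ × ℝ → ℝ) : ℝ × ℝ × ℝ → ℝ :=
  fun x => fderiv ℝ f x (1, 0, 0)

/-- Partial derivative in the second coordinate on `ℝ³ = ℝ × ℝ × ℝ`. -/
noncomputable def d2 (f : ℝ × ℝ × ℝ → ℝ) : ℝ × ℝ × ℝ → ℝ :=
  fun x => fderiv ℝ f x (0, 1, 0)

lemma hasDerivAt_slice2 (g : ℝ × ℝ × ℝ → ℝ) (hg : ContDiff ℝ 1 g) (x1 x3 t : ℝ) :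
    HasDerivAt (fun s => g (x1, s, x3)) (d2 g (x1, t, x3)) t := by
  have hγ : HasDerivAt (fun s : ℝ => ((x1, s, x3) : ℝ × ℝ × ℝ)) ((0, 1, 0) : ℝ × ℝ × ℝ) t :=
    (hasDerivAt_const t x1).prodMk ((hasDerivAt_id t).prodMk (hasDerivAt_const t x3))
  have hf' : HasFDerivAt g (fderiv ℝ g (x1, t, x3)) (x1, t, x3) :=
    (hg.differentiable one_ne_zero (x1, t, x3)).hasFDerivAt
  exact hf'.comp_hasDerivAt t hγ

lemma hasDerivAt_slice1 (g : ℝ × ℝ × ℝ → ℝ) (hg : ContDiff ℝ 1 g) (x2 x3 t : ℝ) :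
    HasDerivAt (fun s => g (s, x2, x3)) (d1 g (t, x2, x3)) t := by
  have hγ : HasDerivAt (fun s : ℝ => ((s, x2, x3) : ℝ × ℝ × ℝ)) ((1, 0, 0) : ℝ × ℝ × ℝ) t :=
    (hasDerivAt_id t).prodMk ((hasDerivAt_const t x2).prodMk (hasDerivAt_const t x3))
  have hf' : HasFDerivAt g (fderiv ℝ g (t, x2, x3)) (t, x2, x3) :=
    (hg.differentiable one_ne_zero (t, x2, x3)).hasFDerivAt
  exact hf'.comp_hasDerivAt t hγ

lemma contDiff_d1 (g : ℝ × ℝ × ℝ → ℝ) (hg : ContDiff ℝ 2 g) : ContDiff ℝ 1 (d1 g) := by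
  have : ContDiff ℝ 1 (fderiv ℝ g) := hg.fderiv_right (by norm_num)
  exact this.clm_apply contDiff_const

lemma contDiff_d2 (g : ℝ × ℝ × ℝ → ℝ) (hg : ContDiff ℝ 2 g) : ContDiff ℝ 1 (d2 g) := by
  have : ContDiff ℝ 1 (fderiv ℝ g) := hg.fderiv_right (by norm_num)
  exact this.clm_apply contDiff_const

lemma continuous_d1 (g : ℝ × ℝ × ℝ → ℝ) (hg : ContDiff ℝ 1 g) : Continuous (d1 g) := by
  have : Continuous (fderiv ℝ g) := hg.continuous_fderiv one_ne_zero
  exact (ContinuousLinearMap.apply ℝ ℝ ((1:ℝ),(0:ℝ),(0:ℝ))).continuous.comp this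

lemma continuous_d2 (g : ℝ × ℝ × ℝ → ℝ) (hg : ContDiff ℝ 1 g) : Continuous (d2 g) := by
  have : Continuous (fderiv ℝ g) := hg.continuous_fderiv one_ne_zero
  exact (ContinuousLinearMap.apply ℝ ℝ ((0:ℝ),(1:ℝ),(0:ℝ))).continuous.comp this

lemma key_sup (F : ℝ → ENNReal) (C : ENNReal) (hfin : ∫⁻ y, F y ≠ ⊤)
    (hFC : ∀ y x : ℝ, y ≤ x → F x ≤ F y + C) (x : ℝ) : F x ≤ C := by
  refine ENNReal.le_of_forall_pos_le_add fun ε hε _ => ?_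
  obtain ⟨y, hyx, hFy⟩ : ∃ y ≤ x, F y ≤ (ε : ENNReal) := by
    by_contra h
    push_neg at h
    apply hfin
    refine top_unique ?_
    calc (⊤ : ENNReal) = ∫⁻ y in Set.Iic x, (ε : ENNReal) := by
          rw [setLIntegral_const]
          simp [Real.volume_Iic, ENNReal.mul_top, (ENNReal.coe_pos.2 hε).ne']
      _ ≤ ∫⁻ y in Set.Iic x, F y := by
          refine setLIntegral_mono' measurableSet_Iic fun y hy => (h y hy).le
      _ ≤ ∫⁻ y, F y := setLIntegral_le_lintegral _ _
  calc F x ≤ F y + C := hFC y x hyx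
    _ ≤ ε + C := by gcongr
    _ = C + ε := add_comm _ _

lemma ftc_bound (G G' : ℝ → ℝ) (hd : ∀ t, HasDerivAt G (G' t) t) (hc : Continuous G')
    (y x : ℝ) (hyx : y ≤ x) :
    ENNReal.ofReal (G x) ≤ ENNReal.ofReal (G y) + ∫⁻ t in Set.Ioc y x, ‖G' t‖₊ := by
  have hint : IntervalIntegrable G' volume y x := hc.intervalIntegrable y x
  have heq : ∫ t in y..x, G' t = G x - G y :=
    intervalIntegral.integral_eq_sub_of_hasDerivAt (fun t _ => hd t) hint
  have h1 : G x = G y + ∫ t in y..x, G' t := by rw [heq]; ring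
  calc ENNReal.ofReal (G x) = ENNReal.ofReal (G y + ∫ t in y..x, G' t) := by rw [← h1]
    _ ≤ ENNReal.ofReal (G y) + ENNReal.ofReal (∫ t in y..x, G' t) := ENNReal.ofReal_add_le
    _ ≤ ENNReal.ofReal (G y) + ∫⁻ t in Set.Ioc y x, ‖G' t‖₊ := by
        gcongr
        rw [intervalIntegral.integral_of_le hyx]
        calc ENNReal.ofReal (∫ t in Set.Ioc y x, G' t)
            ≤ (‖∫ t in Set.Ioc y x, G' t‖₊ : ENNReal) := Real.ofReal_le_enorm _
          _ ≤ ∫⁻ t in Set.Ioc y x, ‖G' t‖₊ := enorm_integral_le_lintegral_enorm _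


lemma hasDerivAt_sq (g g' : ℝ → ℝ) (hd : ∀ t, HasDerivAt g (g' t) t) (t : ℝ) :
    HasDerivAt (fun s => g s ^ 2) (2 * g t * g' t) t := by
  have : HasDerivAt (fun s => g s * g s) (g' t * g t + g t * g' t) t := (hd t).mul (hd t)
  simp only [pow_two]
  convert this using 1
  ring

lemma nnnorm_two_mul_mul (a b : ℝ) : (‖2 * a * b‖₊ : ENNReal) = 2 * (‖a‖₊ * ‖b‖₊) := by
  simp only [nnnorm_mul, ENNReal.coe_mul, mul_assoc]
  congr 1
  simp [nnnorm]
  rfl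

lemma agmon1d (g g' : ℝ → ℝ) (hd : ∀ t, HasDerivAt g (g' t) t) (hc : Continuous g')
    (hg : Continuous g)
    (hfin : ∫⁻ t, ENNReal.ofReal (g t ^ 2) ≠ ⊤) (x : ℝ) :
    ENNReal.ofReal (g x ^ 2) ≤ 2 * ∫⁻ t, (‖g t‖₊ * ‖g' t‖₊ : ENNReal) := by
  refine key_sup (fun t => ENNReal.ofReal (g t ^ 2)) _ hfin (fun y x hyx => ?_) x
  have h := ftc_bound (fun t => g t ^ 2) (fun t => 2 * g t * g' t)
    (hasDerivAt_sq g g' hd) (by continuity) y x hyx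
  refine h.trans ?_
  gcongr
  calc (∫⁻ t in Set.Ioc y x, (‖2 * g t * g' t‖₊ : ENNReal))
      ≤ ∫⁻ t, (‖2 * g t * g' t‖₊ : ENNReal) := setLIntegral_le_lintegral _ _
    _ = 2 * ∫⁻ t, (‖g t‖₊ * ‖g' t‖₊ : ENNReal) := by
        simp_rw [nnnorm_two_mul_mul]
        rw [lintegral_const_mul' _ _ (by norm_num)]

lemma cs_lintegral {α : Type*} [MeasurableSpace α] (μ : Measure α) (φ ψ : α → ENNReal)
    (hφ : AEMeasurable φ μ) (hψ : AEMeasurable ψ μ) :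
    ∫⁻ a, φ a * ψ a ∂μ ≤ (∫⁻ a, φ a ^ (2:ℝ) ∂μ) ^ ((1:ℝ)/2) * (∫⁻ a, ψ a ^ (2:ℝ) ∂μ) ^ ((1:ℝ)/2) :=
  ENNReal.lintegral_mul_le_Lp_mul_Lq μ (by constructor <;> norm_num) hφ hψ


lemma tonelli123 (φ : ℝ × ℝ × ℝ → ENNReal) (hφ : Measurable φ) :
    ∫⁻ x, φ x = ∫⁻ x1, ∫⁻ x2, ∫⁻ x3, φ (x1, x2, x3) := by
  rw [Measure.volume_eq_prod, lintegral_prod _ hφ.aemeasurable]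
  congr 1
  ext x1
  have h : AEMeasurable (fun y : ℝ × ℝ => φ (x1, y)) (volume.prod volume) :=
    (hφ.comp (measurable_const.prodMk measurable_id)).aemeasurable
  rw [Measure.volume_eq_prod, lintegral_prod _ h]

lemma tonelli312 (φ : ℝ × ℝ × ℝ → ENNReal) (hφ : Measurable φ) :
    ∫⁻ x, φ x = ∫⁻ x3, ∫⁻ x1, ∫⁻ x2, φ (x1, x2, x3) := by
  rw [tonelli123 φ hφ]
  have stepA : ∀ x1 : ℝ, ∫⁻ x2, ∫⁻ x3, φ (x1, x2, x3) = ∫⁻ x3, ∫⁻ x2, φ (x1, x2, x3) := by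
    intro x1
    exact lintegral_lintegral_swap
      ((hφ.comp (measurable_const.prodMk measurable_id)).aemeasurable)
  simp_rw [stepA]
  have hm : Measurable (fun q : (ℝ × ℝ) × ℝ => φ (q.1.1, q.2, q.1.2)) :=
    hφ.comp ((measurable_fst.comp measurable_fst).prodMk
      (measurable_snd.prodMk (measurable_snd.comp measurable_fst)))
  exact lintegral_lintegral_swap hm.lintegral_prod_right'.aemeasurable

lemma prod2 (ψ : ℝ × ℝ → ENNReal) (hψ : Measurable ψ) :
    ∫⁻ x1, ∫⁻ x2, ψ (x1, x2) = ∫⁻ p, ψ p := by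
  rw [Measure.volume_eq_prod, lintegral_prod _ hψ.aemeasurable]


lemma sq_conv (t : ℝ) : ((‖t‖₊ : ENNReal)) ^ (2:ℝ) = ENNReal.ofReal (t ^ 2) := by
  rw [← enorm_eq_nnnorm, Real.enorm_eq_ofReal_abs,
    ENNReal.ofReal_rpow_of_nonneg (abs_nonneg t) (by norm_num : (0:ℝ) ≤ 2)]
  congr 1
  rw [show (2:ℝ) = ((2:ℕ):ℝ) by norm_num, Real.rpow_natCast, sq_abs]

lemma layer2 (g : ℝ × ℝ × ℝ → ℝ) (hg : ContDiff ℝ 1 g) (x1 x3 : ℝ)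
    (hu : (∫⁻ x2, (‖g (x1, x2, x3)‖₊ : ENNReal) ^ (2:ℝ)) ≠ ⊤) (x2 : ℝ) :
    (‖g (x1, x2, x3)‖₊ : ENNReal) ^ (2:ℝ) ≤
      2 * (∫⁻ s, (‖g (x1, s, x3)‖₊ : ENNReal) ^ (2:ℝ)) ^ ((1:ℝ)/2) *
        (∫⁻ s, (‖d2 g (x1, s, x3)‖₊ : ENNReal) ^ (2:ℝ)) ^ ((1:ℝ)/2) := by
  have hgc : Continuous g := hg.continuous
  have hd2c : Continuous (d2 g) := continuous_d2 g hg
  have hfin : ∫⁻ s, ENNReal.ofReal (g (x1, s, x3) ^ 2) ≠ ⊤ := by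
    simpa only [← sq_conv] using hu
  have hag := agmon1d (fun s => g (x1, s, x3)) (fun s => d2 g (x1, s, x3))
    (fun t => hasDerivAt_slice2 g hg x1 x3 t)
    (hd2c.comp (by continuity)) (hgc.comp (by continuity)) hfin x2
  rw [sq_conv]
  refine hag.trans ?_
  rw [mul_assoc]
  gcongr
  have := cs_lintegral volume (fun s => (‖g (x1, s, x3)‖₊ : ENNReal))
    (fun s => (‖d2 g (x1, s, x3)‖₊ : ENNReal))
    ((hgc.comp (by continuity : Continuous fun s : ℝ => ((x1, s, x3) : ℝ×ℝ×ℝ))).measurable.nnnorm.coe_nnreal_ennreal.aemeasurable)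
    ((hd2c.comp (by continuity : Continuous fun s : ℝ => ((x1, s, x3) : ℝ×ℝ×ℝ))).measurable.nnnorm.coe_nnreal_ennreal.aemeasurable)
  exact this

lemma layer1 (g : ℝ × ℝ × ℝ → ℝ) (hg : ContDiff ℝ 1 g) (x3 : ℝ)
    (hA : (∫⁻ x1, ∫⁻ x2, (‖g (x1, x2, x3)‖₊ : ENNReal) ^ (2:ℝ)) ≠ ⊤) (x1 : ℝ) :
    (∫⁻ x2, (‖g (x1, x2, x3)‖₊ : ENNReal) ^ (2:ℝ)) ≤
      2 * (∫⁻ x1', ∫⁻ x2, (‖g (x1', x2, x3)‖₊ : ENNReal) ^ (2:ℝ)) ^ ((1:ℝ)/2) *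
        (∫⁻ x1', ∫⁻ x2, (‖d1 g (x1', x2, x3)‖₊ : ENNReal) ^ (2:ℝ)) ^ ((1:ℝ)/2) := by
  have hgc : Continuous g := hg.continuous
  have hd1c : Continuous (d1 g) := continuous_d1 g hg
  have hmprod : Continuous (fun p : ℝ × ℝ => ((p.1, p.2, x3) : ℝ×ℝ×ℝ)) := by continuity
  -- the middle quantity: double integral of ‖g‖ * ‖d1 g‖
  set M : ENNReal := ∫⁻ x1', ∫⁻ x2, ((‖g (x1', x2, x3)‖₊ : ENNReal) * ‖d1 g (x1', x2, x3)‖₊)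
    with hM
  have hkey : (∫⁻ x2, (‖g (x1, x2, x3)‖₊ : ENNReal) ^ (2:ℝ)) ≤ 2 * M := by
    refine key_sup (fun s => ∫⁻ x2, (‖g (s, x2, x3)‖₊ : ENNReal) ^ (2:ℝ)) (2 * M) hA ?_ x1
    intro y x hyx
    have hpt : ∀ x2 : ℝ, (‖g (x, x2, x3)‖₊ : ENNReal) ^ (2:ℝ) ≤
        (‖g (y, x2, x3)‖₊ : ENNReal) ^ (2:ℝ) +
          ∫⁻ t in Set.Ioc y x, (‖2 * g (t, x2, x3) * d1 g (t, x2, x3)‖₊ : ENNReal) := by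
      intro x2
      rw [sq_conv, sq_conv]
      exact ftc_bound (fun s => g (s, x2, x3) ^ 2)
        (fun s => 2 * g (s, x2, x3) * d1 g (s, x2, x3))
        (hasDerivAt_sq _ _ (fun s => hasDerivAt_slice1 g hg x2 x3 s))
        (by
          have h : Continuous fun s : ℝ => ((s, x2, x3) : ℝ×ℝ×ℝ) := by continuity
          exact (continuous_const.mul (hgc.comp h)).mul (hd1c.comp h)) y x hyx
    calc (∫⁻ x2, (‖g (x, x2, x3)‖₊ : ENNReal) ^ (2:ℝ))
        ≤ ∫⁻ x2, ((‖g (y, x2, x3)‖₊ : ENNReal) ^ (2:ℝ) +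
            ∫⁻ t in Set.Ioc y x, (‖2 * g (t, x2, x3) * d1 g (t, x2, x3)‖₊ : ENNReal)) :=
          lintegral_mono hpt
      _ = (∫⁻ x2, (‖g (y, x2, x3)‖₊ : ENNReal) ^ (2:ℝ)) +
            ∫⁻ x2, ∫⁻ t in Set.Ioc y x, (‖2 * g (t, x2, x3) * d1 g (t, x2, x3)‖₊ : ENNReal) := by
          refine lintegral_add_left ?_ _
          exact ((hgc.comp (by continuity : Continuous fun s : ℝ => ((y, s, x3) : ℝ×ℝ×ℝ))).measurable.nnnorm.coe_nnreal_ennreal).pow_const _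
      _ ≤ (∫⁻ x2, (‖g (y, x2, x3)‖₊ : ENNReal) ^ (2:ℝ)) + 2 * M := by
          gcongr
          calc ∫⁻ x2, ∫⁻ t in Set.Ioc y x, (‖2 * g (t, x2, x3) * d1 g (t, x2, x3)‖₊ : ENNReal)
              ≤ ∫⁻ x2, ∫⁻ t, (‖2 * g (t, x2, x3) * d1 g (t, x2, x3)‖₊ : ENNReal) :=
                lintegral_mono fun x2 => setLIntegral_le_lintegral _ _
            _ = ∫⁻ x2, ∫⁻ t, 2 * ((‖g (t, x2, x3)‖₊ : ENNReal) * ‖d1 g (t, x2, x3)‖₊) := by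
                simp_rw [nnnorm_two_mul_mul]
            _ = 2 * ∫⁻ x2, ∫⁻ t, ((‖g (t, x2, x3)‖₊ : ENNReal) * ‖d1 g (t, x2, x3)‖₊) := by
                rw [← lintegral_const_mul' _ _ (by norm_num : (2:ENNReal) ≠ ⊤)]
                simp_rw [lintegral_const_mul' (2:ENNReal) _ (by norm_num : (2:ENNReal) ≠ ⊤)]
            _ = 2 * M := by
                rw [hM]
                congr 1
                refine lintegral_lintegral_swap ?_
                have : Continuous fun q : ℝ × ℝ => ((q.2, q.1, x3) : ℝ×ℝ×ℝ) := by continuity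
                exact ((hgc.comp this).measurable.nnnorm.coe_nnreal_ennreal.mul
                  ((hd1c.comp this).measurable.nnnorm.coe_nnreal_ennreal)).aemeasurable
  refine hkey.trans ?_
  rw [mul_assoc]
  gcongr
  -- Cauchy-Schwarz on the plane
  have hψg : Measurable fun p : ℝ × ℝ => (‖g (p.1, p.2, x3)‖₊ : ENNReal) :=
    (hgc.comp hmprod).measurable.nnnorm.coe_nnreal_ennreal
  have hψd : Measurable fun p : ℝ × ℝ => (‖d1 g (p.1, p.2, x3)‖₊ : ENNReal) :=
    (hd1c.comp hmprod).measurable.nnnorm.coe_nnreal_ennreal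
  calc M = ∫⁻ p : ℝ × ℝ, ((‖g (p.1, p.2, x3)‖₊ : ENNReal) * ‖d1 g (p.1, p.2, x3)‖₊) := by
        rw [hM]; exact prod2 _ (hψg.mul hψd)
    _ ≤ (∫⁻ p : ℝ × ℝ, (‖g (p.1, p.2, x3)‖₊ : ENNReal) ^ (2:ℝ)) ^ ((1:ℝ)/2) *
          (∫⁻ p : ℝ × ℝ, (‖d1 g (p.1, p.2, x3)‖₊ : ENNReal) ^ (2:ℝ)) ^ ((1:ℝ)/2) :=
        cs_lintegral _ _ _ hψg.aemeasurable hψd.aemeasurable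
    _ = (∫⁻ x1', ∫⁻ x2, (‖g (x1', x2, x3)‖₊ : ENNReal) ^ (2:ℝ)) ^ ((1:ℝ)/2) *
          (∫⁻ x1', ∫⁻ x2, (‖d1 g (x1', x2, x3)‖₊ : ENNReal) ^ (2:ℝ)) ^ ((1:ℝ)/2) := by
        rw [prod2 _ (hψg.pow_const _), prod2 _ (hψd.pow_const _)]

lemma meas_iter (φ : ℝ × ℝ × ℝ → ENNReal) (hφ : Measurable φ) :
    Measurable fun x3 : ℝ => ∫⁻ x1, ∫⁻ x2, φ (x1, x2, x3) := by
  have h1 : Measurable (fun q : (ℝ × ℝ) × ℝ => φ (q.1.2, q.2, q.1.1)) :=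
    hφ.comp ((measurable_snd.comp measurable_fst).prodMk
      (measurable_snd.prodMk (measurable_fst.comp measurable_fst)))
  exact h1.lintegral_prod_right'.lintegral_prod_right'

lemma const_algebra (a b c d : ENNReal) :
    2 * (2 * a ^ ((1:ℝ)/2) * b ^ ((1:ℝ)/2)) ^ ((1:ℝ)/2) *
      (2 * c ^ ((1:ℝ)/2) * d ^ ((1:ℝ)/2)) ^ ((1:ℝ)/2)
    = 4 * (a ^ ((1:ℝ)/4) * b ^ ((1:ℝ)/4) * c ^ ((1:ℝ)/4) * d ^ ((1:ℝ)/4)) := by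
  rw [ENNReal.mul_rpow_of_nonneg _ _ (by norm_num : (0:ℝ) ≤ 1/2),
      ENNReal.mul_rpow_of_nonneg _ _ (by norm_num : (0:ℝ) ≤ 1/2),
      ENNReal.mul_rpow_of_nonneg _ _ (by norm_num : (0:ℝ) ≤ 1/2),
      ENNReal.mul_rpow_of_nonneg _ _ (by norm_num : (0:ℝ) ≤ 1/2),
      ← ENNReal.rpow_mul a, ← ENNReal.rpow_mul b, ← ENNReal.rpow_mul c, ← ENNReal.rpow_mul d]
  norm_num
  have h2 : ((2:ENNReal) ^ ((1:ℝ)/2)) * ((2:ENNReal) ^ ((1:ℝ)/2)) = 2 := by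
    rw [← ENNReal.rpow_add _ _ (by norm_num) (by norm_num)]
    norm_num
  calc 2 * (2 ^ ((1:ℝ)/2) * a ^ ((1:ℝ)/4) * b ^ ((1:ℝ)/4)) *
        (2 ^ ((1:ℝ)/2) * c ^ ((1:ℝ)/4) * d ^ ((1:ℝ)/4))
      = 2 * (2 ^ ((1:ℝ)/2) * 2 ^ ((1:ℝ)/2)) *
        (a ^ ((1:ℝ)/4) * b ^ ((1:ℝ)/4) * c ^ ((1:ℝ)/4) * d ^ ((1:ℝ)/4)) := by ring
    _ = 4 * (a ^ ((1:ℝ)/4) * b ^ ((1:ℝ)/4) * c ^ ((1:ℝ)/4) * d ^ ((1:ℝ)/4)) := by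
        rw [h2]; norm_num

lemma per_x3 (f : ℝ × ℝ × ℝ → ℝ) (hf : ContDiff ℝ 2 f) (x3 : ℝ)
    (hA : (∫⁻ x1, ∫⁻ x2, (‖f (x1, x2, x3)‖₊ : ENNReal) ^ (2:ℝ)) ≠ ⊤)
    (hB : (∫⁻ x1, ∫⁻ x2, (‖d1 f (x1, x2, x3)‖₊ : ENNReal) ^ (2:ℝ)) ≠ ⊤)
    (hC : (∫⁻ x1, ∫⁻ x2, (‖d2 f (x1, x2, x3)‖₊ : ENNReal) ^ (2:ℝ)) ≠ ⊤)
    (hD : (∫⁻ x1, ∫⁻ x2, (‖d1 (d2 f) (x1, x2, x3)‖₊ : ENNReal) ^ (2:ℝ)) ≠ ⊤) :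
    ((‖(eLpNorm (fun x1 : ℝ =>
        (eLpNorm (fun x2 : ℝ => f (x1, x2, x3)) ⊤ volume).toReal) ⊤ volume).toReal‖₊ : ENNReal)) ^ (2:ℝ)
      ≤ 4 * ((∫⁻ x1, ∫⁻ x2, (‖f (x1, x2, x3)‖₊ : ENNReal) ^ (2:ℝ)) ^ ((1:ℝ)/4) *
          (∫⁻ x1, ∫⁻ x2, (‖d1 f (x1, x2, x3)‖₊ : ENNReal) ^ (2:ℝ)) ^ ((1:ℝ)/4) *
          (∫⁻ x1, ∫⁻ x2, (‖d2 f (x1, x2, x3)‖₊ : ENNReal) ^ (2:ℝ)) ^ ((1:ℝ)/4) *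
          (∫⁻ x1, ∫⁻ x2, (‖d1 (d2 f) (x1, x2, x3)‖₊ : ENNReal) ^ (2:ℝ)) ^ ((1:ℝ)/4)) := by
  have hf1 : ContDiff ℝ 1 f := hf.of_le one_le_two
  have hfd2 : ContDiff ℝ 1 (d2 f) := contDiff_d2 f hf
  have hgc : Continuous f := hf1.continuous
  have hd2c : Continuous (d2 f) := hfd2.continuous
  set A := ∫⁻ x1, ∫⁻ x2, (‖f (x1, x2, x3)‖₊ : ENNReal) ^ (2:ℝ) with hAdef
  set B := ∫⁻ x1, ∫⁻ x2, (‖d1 f (x1, x2, x3)‖₊ : ENNReal) ^ (2:ℝ) with hBdef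
  set Cq := ∫⁻ x1, ∫⁻ x2, (‖d2 f (x1, x2, x3)‖₊ : ENNReal) ^ (2:ℝ) with hCdef
  set Dq := ∫⁻ x1, ∫⁻ x2, (‖d1 (d2 f) (x1, x2, x3)‖₊ : ENNReal) ^ (2:ℝ) with hDdef
  set K := 4 * (A ^ ((1:ℝ)/4) * B ^ ((1:ℝ)/4) * Cq ^ ((1:ℝ)/4) * Dq ^ ((1:ℝ)/4)) with hKdef
  have hKne : K ≠ ⊤ := by
    rw [hKdef]
    refine ENNReal.mul_ne_top (by norm_num) ?_
    refine ENNReal.mul_ne_top (ENNReal.mul_ne_top (ENNReal.mul_ne_top ?_ ?_) ?_) ?_ <;>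
      exact ENNReal.rpow_ne_top_of_nonneg (by norm_num) (by assumption)
  -- layer-1 bounds
  have hL1f := layer1 f hf1 x3 hA
  have hL1d2 := layer1 (d2 f) hfd2 x3 hC
  -- a.e. finiteness of the inner slice integral in x1
  have hu2meas : Measurable fun x1 : ℝ => ∫⁻ x2, (‖f (x1, x2, x3)‖₊ : ENNReal) ^ (2:ℝ) := by
    have hc : Continuous fun p : ℝ × ℝ => ((p.1, p.2, x3) : ℝ×ℝ×ℝ) := by continuity
    exact ((hgc.comp hc).measurable.nnnorm.coe_nnreal_ennreal.pow_const _).lintegral_prod_right'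
  have haex1 : ∀ᵐ x1 : ℝ, (∫⁻ x2, (‖f (x1, x2, x3)‖₊ : ENNReal) ^ (2:ℝ)) < ⊤ :=
    ae_lt_top hu2meas hA
  -- for a.e. x1 : the essSup in x2 is ≤ K ^ (1/2)
  have hstep1 : ∀ᵐ x1 : ℝ, eLpNorm (fun x2 : ℝ => f (x1, x2, x3)) ⊤ volume ≤ K ^ ((1:ℝ)/2) := by
    filter_upwards [haex1] with x1 hx1
    have hptsq : ∀ x2 : ℝ, (‖f (x1, x2, x3)‖₊ : ENNReal) ^ (2:ℝ) ≤ K := by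
      intro x2
      have h2 := layer2 f hf1 x1 x3 hx1.ne x2
      refine h2.trans ?_
      have hub : 2 * (∫⁻ s, (‖f (x1, s, x3)‖₊ : ENNReal) ^ (2:ℝ)) ^ ((1:ℝ)/2) *
          (∫⁻ s, (‖d2 f (x1, s, x3)‖₊ : ENNReal) ^ (2:ℝ)) ^ ((1:ℝ)/2) ≤
          2 * (2 * A ^ ((1:ℝ)/2) * B ^ ((1:ℝ)/2)) ^ ((1:ℝ)/2) *
          (2 * Cq ^ ((1:ℝ)/2) * Dq ^ ((1:ℝ)/2)) ^ ((1:ℝ)/2) := by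
        gcongr
        · exact hL1f x1
        · exact hL1d2 x1
      refine hub.trans ?_
      rw [const_algebra, hKdef]
    have hpt : ∀ x2 : ℝ, (‖f (x1, x2, x3)‖₊ : ENNReal) ≤ K ^ ((1:ℝ)/2) := by
      intro x2
      have := ENNReal.rpow_le_rpow (hptsq x2) (by norm_num : (0:ℝ) ≤ 1/2)
      rwa [← ENNReal.rpow_mul, show (2:ℝ) * (1/2) = 1 by norm_num, ENNReal.rpow_one] at this
    rw [eLpNorm_exponent_top]
    exact essSup_le_of_ae_le _ (Filter.Eventually.of_forall hpt)
  -- the middle essSup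
  have hstep2 : eLpNorm (fun x1 : ℝ =>
      (eLpNorm (fun x2 : ℝ => f (x1, x2, x3)) ⊤ volume).toReal) ⊤ volume ≤ K ^ ((1:ℝ)/2) := by
    rw [eLpNorm_exponent_top]
    refine essSup_le_of_ae_le _ ?_
    filter_upwards [hstep1] with x1 hx1
    calc ((‖(eLpNorm (fun x2 : ℝ => f (x1, x2, x3)) ⊤ volume).toReal‖₊ : ENNReal))
        = ENNReal.ofReal ((eLpNorm (fun x2 : ℝ => f (x1, x2, x3)) ⊤ volume).toReal) := by
          rw [← enorm_eq_nnnorm, Real.enorm_eq_ofReal ENNReal.toReal_nonneg]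
      _ ≤ eLpNorm (fun x2 : ℝ => f (x1, x2, x3)) ⊤ volume := ENNReal.ofReal_toReal_le
      _ ≤ K ^ ((1:ℝ)/2) := hx1
  -- conclude
  have hfinal : ((‖(eLpNorm (fun x1 : ℝ =>
      (eLpNorm (fun x2 : ℝ => f (x1, x2, x3)) ⊤ volume).toReal) ⊤ volume).toReal‖₊ : ENNReal))
      ≤ K ^ ((1:ℝ)/2) := by
    calc ((‖(eLpNorm (fun x1 : ℝ =>
        (eLpNorm (fun x2 : ℝ => f (x1, x2, x3)) ⊤ volume).toReal) ⊤ volume).toReal‖₊ : ENNReal))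
        = ENNReal.ofReal ((eLpNorm (fun x1 : ℝ =>
            (eLpNorm (fun x2 : ℝ => f (x1, x2, x3)) ⊤ volume).toReal) ⊤ volume).toReal) := by
          rw [← enorm_eq_nnnorm, Real.enorm_eq_ofReal ENNReal.toReal_nonneg]
      _ ≤ eLpNorm (fun x1 : ℝ =>
            (eLpNorm (fun x2 : ℝ => f (x1, x2, x3)) ⊤ volume).toReal) ⊤ volume :=
          ENNReal.ofReal_toReal_le
      _ ≤ K ^ ((1:ℝ)/2) := hstep2
  have := ENNReal.rpow_le_rpow hfinal (by norm_num : (0:ℝ) ≤ 2)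
  rwa [← ENNReal.rpow_mul, show (1:ℝ)/2 * 2 = 1 by norm_num, ENNReal.rpow_one] at this

lemma eLpNorm_two {α : Type*} [MeasurableSpace α] (μ : Measure α) (g : α → ℝ) :
    eLpNorm g 2 μ = (∫⁻ x, (‖g x‖₊ : ENNReal) ^ (2:ℝ) ∂μ) ^ ((1:ℝ)/2) := by
  rw [eLpNorm_eq_lintegral_rpow_enorm_toReal (by norm_num) (by norm_num)]
  simp only [enorm_eq_nnnorm]
  norm_num

lemma mem_two_ne_top {α : Type*} [MeasurableSpace α] {μ : Measure α} {g : α → ℝ}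
    (h : MemLp g 2 μ) : (∫⁻ x, (‖g x‖₊ : ENNReal) ^ (2:ℝ) ∂μ) ≠ ⊤ := by
  intro htop
  have h2 := h.2
  rw [eLpNorm_two μ g, htop, ENNReal.top_rpow_of_pos (by norm_num)] at h2
  exact (lt_irrefl _ h2).elim

lemma pow_half_prod (a b : ENNReal) :
    (a ^ ((1:ℝ)/4) * b ^ ((1:ℝ)/4)) ^ (2:ℝ) = a ^ ((1:ℝ)/2) * b ^ ((1:ℝ)/2) := by
  rw [ENNReal.mul_rpow_of_nonneg _ _ (by norm_num : (0:ℝ) ≤ 2),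
    ← ENNReal.rpow_mul, ← ENNReal.rpow_mul]
  norm_num

lemma half_sq (a : ENNReal) : (a ^ ((1:ℝ)/2)) ^ (2:ℝ) = a := by
  rw [← ENNReal.rpow_mul]
  norm_num

lemma four_rpow_half : (4:ENNReal) ^ ((1:ℝ)/2) = 2 := by
  have h4 : (4:ENNReal) = 2 ^ (2:ℝ) := by
    rw [show (2:ℝ) = ((2:ℕ):ℝ) by norm_num, ENNReal.rpow_natCast]
    norm_num
  rw [h4, ← ENNReal.rpow_mul]
  norm_num

lemma final_algebra (a b c d : ENNReal) :
    (4 * ((a ^ ((1:ℝ)/2) * b ^ ((1:ℝ)/2)) ^ ((1:ℝ)/2) *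
      (c ^ ((1:ℝ)/2) * d ^ ((1:ℝ)/2)) ^ ((1:ℝ)/2))) ^ ((1:ℝ)/2)
    = 2 * (a ^ ((1:ℝ)/8) * b ^ ((1:ℝ)/8) * c ^ ((1:ℝ)/8) * d ^ ((1:ℝ)/8)) := by
  simp only [ENNReal.mul_rpow_of_nonneg _ _ (by norm_num : (0:ℝ) ≤ 1/2),
    ← ENNReal.rpow_mul, four_rpow_half]
  norm_num
  ring

/-- Mixed norm bound:
`‖f‖_{L²_{x₃}L^∞_{x₁}L^∞_{x₂}} ≤ 2^{3/2} ‖f‖^{1/4}‖∂₁f‖^{1/4}‖∂₂f‖^{1/4}‖∂₁∂₂f‖^{1/4}`. -/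
theorem mixed_norm_Linfty_x1x2 (f : ℝ × ℝ × ℝ → ℝ) (hf : ContDiff ℝ 2 f)
    (h0 : MemLp f 2 volume) (h1 : MemLp (d1 f) 2 volume)
    (h2 : MemLp (d2 f) 2 volume) (h12 : MemLp (d1 (d2 f)) 2 volume) :
    (eLpNorm (fun x3 : ℝ =>
        (eLpNorm (fun x1 : ℝ =>
          (eLpNorm (fun x2 : ℝ => f (x1, x2, x3)) ⊤ volume).toReal) ⊤ volume).toReal)
        2 volume).toReal ≤
      (2 : ℝ) ^ ((3:ℝ)/2) * (eLpNorm f 2 volume).toReal ^ ((1:ℝ)/4) *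
        (eLpNorm (d1 f) 2 volume).toReal ^ ((1:ℝ)/4) *
        (eLpNorm (d2 f) 2 volume).toReal ^ ((1:ℝ)/4) *
        (eLpNorm (d1 (d2 f)) 2 volume).toReal ^ ((1:ℝ)/4) := by
  have hf1 : ContDiff ℝ 1 f := hf.of_le one_le_two
  have hfd2 : ContDiff ℝ 1 (d2 f) := contDiff_d2 f hf
  have cf : Continuous f := hf1.continuous
  have cd1 : Continuous (d1 f) := continuous_d1 f hf1
  have cd2 : Continuous (d2 f) := hfd2.continuous
  have cd12 : Continuous (d1 (d2 f)) := continuous_d1 (d2 f) hfd2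
  -- the four squared integrands on ℝ³
  have m0 : Measurable fun x : ℝ×ℝ×ℝ => (‖f x‖₊ : ENNReal) ^ (2:ℝ) :=
    cf.measurable.nnnorm.coe_nnreal_ennreal.pow_const _
  have m1 : Measurable fun x : ℝ×ℝ×ℝ => (‖d1 f x‖₊ : ENNReal) ^ (2:ℝ) :=
    cd1.measurable.nnnorm.coe_nnreal_ennreal.pow_const _
  have m2 : Measurable fun x : ℝ×ℝ×ℝ => (‖d2 f x‖₊ : ENNReal) ^ (2:ℝ) :=
    cd2.measurable.nnnorm.coe_nnreal_ennreal.pow_const _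
  have m12 : Measurable fun x : ℝ×ℝ×ℝ => (‖d1 (d2 f) x‖₊ : ENNReal) ^ (2:ℝ) :=
    cd12.measurable.nnnorm.coe_nnreal_ennreal.pow_const _
  -- global integrals
  set N0 := ∫⁻ x, (‖f x‖₊ : ENNReal) ^ (2:ℝ) with hN0
  set N1 := ∫⁻ x, (‖d1 f x‖₊ : ENNReal) ^ (2:ℝ) with hN1
  set N2 := ∫⁻ x, (‖d2 f x‖₊ : ENNReal) ^ (2:ℝ) with hN2
  set N12 := ∫⁻ x, (‖d1 (d2 f) x‖₊ : ENNReal) ^ (2:ℝ) with hN12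
  have hN0t : N0 ≠ ⊤ := mem_two_ne_top h0
  have hN1t : N1 ≠ ⊤ := mem_two_ne_top h1
  have hN2t : N2 ≠ ⊤ := mem_two_ne_top h2
  have hN12t : N12 ≠ ⊤ := mem_two_ne_top h12
  -- slice functions of x3
  set Af : ℝ → ENNReal := fun x3 => ∫⁻ x1, ∫⁻ x2, (‖f (x1, x2, x3)‖₊ : ENNReal) ^ (2:ℝ) with hAf
  set Bf : ℝ → ENNReal := fun x3 => ∫⁻ x1, ∫⁻ x2, (‖d1 f (x1, x2, x3)‖₊ : ENNReal) ^ (2:ℝ) with hBf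
  set Cf : ℝ → ENNReal := fun x3 => ∫⁻ x1, ∫⁻ x2, (‖d2 f (x1, x2, x3)‖₊ : ENNReal) ^ (2:ℝ) with hCf
  set Df : ℝ → ENNReal := fun x3 => ∫⁻ x1, ∫⁻ x2, (‖d1 (d2 f) (x1, x2, x3)‖₊ : ENNReal) ^ (2:ℝ)
    with hDf
  have mAf : Measurable Af := meas_iter _ m0
  have mBf : Measurable Bf := meas_iter _ m1
  have mCf : Measurable Cf := meas_iter _ m2
  have mDf : Measurable Df := meas_iter _ m12
  have hIA : ∫⁻ x3, Af x3 = N0 := (tonelli312 _ m0).symm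
  have hIB : ∫⁻ x3, Bf x3 = N1 := (tonelli312 _ m1).symm
  have hIC : ∫⁻ x3, Cf x3 = N2 := (tonelli312 _ m2).symm
  have hID : ∫⁻ x3, Df x3 = N12 := (tonelli312 _ m12).symm
  have haeA : ∀ᵐ x3 : ℝ, Af x3 < ⊤ := ae_lt_top mAf (by rw [hIA]; exact hN0t)
  have haeB : ∀ᵐ x3 : ℝ, Bf x3 < ⊤ := ae_lt_top mBf (by rw [hIB]; exact hN1t)
  have haeC : ∀ᵐ x3 : ℝ, Cf x3 < ⊤ := ae_lt_top mCf (by rw [hIC]; exact hN2t)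
  have haeD : ∀ᵐ x3 : ℝ, Df x3 < ⊤ := ae_lt_top mDf (by rw [hID]; exact hN12t)
  -- pointwise a.e. bound
  set G : ℝ → ℝ := fun x3 => (eLpNorm (fun x1 : ℝ =>
      (eLpNorm (fun x2 : ℝ => f (x1, x2, x3)) ⊤ volume).toReal) ⊤ volume).toReal with hG
  have hmain : ∀ᵐ x3 : ℝ, (‖G x3‖₊ : ENNReal) ^ (2:ℝ) ≤
      4 * (Af x3 ^ ((1:ℝ)/4) * Bf x3 ^ ((1:ℝ)/4) * Cf x3 ^ ((1:ℝ)/4) * Df x3 ^ ((1:ℝ)/4)) := by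
    filter_upwards [haeA, haeB, haeC, haeD] with x3 hA hB hC hD
    exact per_x3 f hf x3 hA.ne hB.ne hC.ne hD.ne
  -- integrate
  have hIG : (∫⁻ x3, (‖G x3‖₊ : ENNReal) ^ (2:ℝ)) ≤
      4 * ((N0 ^ ((1:ℝ)/2) * N1 ^ ((1:ℝ)/2)) ^ ((1:ℝ)/2) *
        (N2 ^ ((1:ℝ)/2) * N12 ^ ((1:ℝ)/2)) ^ ((1:ℝ)/2)) := by
    calc (∫⁻ x3, (‖G x3‖₊ : ENNReal) ^ (2:ℝ))
        ≤ ∫⁻ x3, 4 * (Af x3 ^ ((1:ℝ)/4) * Bf x3 ^ ((1:ℝ)/4) * Cf x3 ^ ((1:ℝ)/4) *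
            Df x3 ^ ((1:ℝ)/4)) := lintegral_mono_ae hmain
      _ = 4 * ∫⁻ x3, (Af x3 ^ ((1:ℝ)/4) * Bf x3 ^ ((1:ℝ)/4)) *
            (Cf x3 ^ ((1:ℝ)/4) * Df x3 ^ ((1:ℝ)/4)) := by
          rw [lintegral_const_mul' _ _ (by norm_num : (4:ENNReal) ≠ ⊤)]
          congr 1
          apply lintegral_congr
          intro x3
          ring
      _ ≤ 4 * ((∫⁻ x3, (Af x3 ^ ((1:ℝ)/4) * Bf x3 ^ ((1:ℝ)/4)) ^ (2:ℝ)) ^ ((1:ℝ)/2) *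
            (∫⁻ x3, (Cf x3 ^ ((1:ℝ)/4) * Df x3 ^ ((1:ℝ)/4)) ^ (2:ℝ)) ^ ((1:ℝ)/2)) := by
          gcongr
          exact cs_lintegral volume _ _
            ((mAf.pow_const _).mul (mBf.pow_const _)).aemeasurable
            ((mCf.pow_const _).mul (mDf.pow_const _)).aemeasurable
      _ = 4 * ((∫⁻ x3, Af x3 ^ ((1:ℝ)/2) * Bf x3 ^ ((1:ℝ)/2)) ^ ((1:ℝ)/2) *
            (∫⁻ x3, Cf x3 ^ ((1:ℝ)/2) * Df x3 ^ ((1:ℝ)/2)) ^ ((1:ℝ)/2)) := by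
          simp_rw [pow_half_prod]
      _ ≤ 4 * (((∫⁻ x3, (Af x3 ^ ((1:ℝ)/2)) ^ (2:ℝ)) ^ ((1:ℝ)/2) *
              (∫⁻ x3, (Bf x3 ^ ((1:ℝ)/2)) ^ (2:ℝ)) ^ ((1:ℝ)/2)) ^ ((1:ℝ)/2) *
            ((∫⁻ x3, (Cf x3 ^ ((1:ℝ)/2)) ^ (2:ℝ)) ^ ((1:ℝ)/2) *
              (∫⁻ x3, (Df x3 ^ ((1:ℝ)/2)) ^ (2:ℝ)) ^ ((1:ℝ)/2)) ^ ((1:ℝ)/2)) := by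
          gcongr 4 * (?_ * ?_)
          · exact ENNReal.rpow_le_rpow (cs_lintegral volume _ _
              (mAf.pow_const _).aemeasurable (mBf.pow_const _).aemeasurable) (by norm_num)
          · exact ENNReal.rpow_le_rpow (cs_lintegral volume _ _
              (mCf.pow_const _).aemeasurable (mDf.pow_const _).aemeasurable) (by norm_num)
      _ = 4 * ((N0 ^ ((1:ℝ)/2) * N1 ^ ((1:ℝ)/2)) ^ ((1:ℝ)/2) *
            (N2 ^ ((1:ℝ)/2) * N12 ^ ((1:ℝ)/2)) ^ ((1:ℝ)/2)) := by
          simp_rw [half_sq]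
          rw [hIA, hIB, hIC, hID]
  -- pass to eLpNorm and toReal
  have hLHS : eLpNorm G 2 volume ≤
      2 * (N0 ^ ((1:ℝ)/8) * N1 ^ ((1:ℝ)/8) * N2 ^ ((1:ℝ)/8) * N12 ^ ((1:ℝ)/8)) := by
    rw [eLpNorm_two volume G, ← final_algebra N0 N1 N2 N12]
    exact ENNReal.rpow_le_rpow hIG (by norm_num)
  have hRne : (2 : ENNReal) * (N0 ^ ((1:ℝ)/8) * N1 ^ ((1:ℝ)/8) * N2 ^ ((1:ℝ)/8) *
      N12 ^ ((1:ℝ)/8)) ≠ ⊤ := by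
    refine ENNReal.mul_ne_top (by norm_num) ?_
    refine ENNReal.mul_ne_top (ENNReal.mul_ne_top (ENNReal.mul_ne_top ?_ ?_) ?_) ?_ <;>
      exact ENNReal.rpow_ne_top_of_nonneg (by norm_num) (by assumption)
  have hreal : (eLpNorm G 2 volume).toReal ≤
      2 * (N0.toReal ^ ((1:ℝ)/8) * N1.toReal ^ ((1:ℝ)/8) * N2.toReal ^ ((1:ℝ)/8) *
        N12.toReal ^ ((1:ℝ)/8)) := by
    refine (ENNReal.toReal_mono hRne hLHS).trans_eq ?_
    rw [ENNReal.toReal_mul, ENNReal.toReal_mul, ENNReal.toReal_mul, ENNReal.toReal_mul,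
      ← ENNReal.toReal_rpow, ← ENNReal.toReal_rpow, ← ENNReal.toReal_rpow,
      ← ENNReal.toReal_rpow]
    norm_num
  -- rewrite the RHS of the goal
  have hNorm : ∀ (g : ℝ×ℝ×ℝ → ℝ) (N : ENNReal), N = ∫⁻ x, (‖g x‖₊ : ENNReal) ^ (2:ℝ) →
      (eLpNorm g 2 volume).toReal ^ ((1:ℝ)/4) = N.toReal ^ ((1:ℝ)/8) := by
    intro g N hN
    rw [eLpNorm_two volume g, ← hN, ← ENNReal.toReal_rpow, ← Real.rpow_mul ENNReal.toReal_nonneg]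
    norm_num
  rw [hNorm f N0 hN0, hNorm (d1 f) N1 hN1, hNorm (d2 f) N2 hN2, hNorm (d1 (d2 f)) N12 hN12]
  have h2le : (2:ℝ) ≤ 2 ^ ((3:ℝ)/2) := by
    calc (2:ℝ) = 2 ^ (1:ℝ) := (Real.rpow_one 2).symm
      _ ≤ 2 ^ ((3:ℝ)/2) :=
        Real.rpow_le_rpow_of_exponent_le (by norm_num) (by norm_num)
  have hnn : ∀ N : ENNReal, (0:ℝ) ≤ N.toReal ^ ((1:ℝ)/8) := fun N =>
    Real.rpow_nonneg ENNReal.toReal_nonneg _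
  calc (eLpNorm G 2 volume).toReal
      ≤ 2 * (N0.toReal ^ ((1:ℝ)/8) * N1.toReal ^ ((1:ℝ)/8) * N2.toReal ^ ((1:ℝ)/8) *
          N12.toReal ^ ((1:ℝ)/8)) := hreal
    _ ≤ 2 ^ ((3:ℝ)/2) * (N0.toReal ^ ((1:ℝ)/8) * N1.toReal ^ ((1:ℝ)/8) *
          N2.toReal ^ ((1:ℝ)/8) * N12.toReal ^ ((1:ℝ)/8)) := by
        refine mul_le_mul_of_nonneg_right h2le ?_
        have := hnn N0; have := hnn N1; have := hnn N2; have := hnn N12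
        positivity
    _ = 2 ^ ((3:ℝ)/2) * N0.toReal ^ ((1:ℝ)/8) * N1.toReal ^ ((1:ℝ)/8) *
          N2.toReal ^ ((1:ℝ)/8) * N12.toReal ^ ((1:ℝ)/8) := by ring
end

section
/- For a function f on ℝ³ with f and ∂₁f in L², the mixed norm ‖f‖_{L²_{x₃}L²_{x₂}L^∞_{x₁}} (L^∞ in x₁ first, then L² in x₂ and x₃) is bounded by √2 ‖f‖_{L²}^{1/2} ‖∂₁f‖_{L²}^{1/2}. -/
open MeasureTheory

open Filter Topology
open scoped ENNReal NNReal

lemma agmon1d_s7 (g : ℝ → ℝ) (hg : ContDiff ℝ 1 g) (hg2 : MemLp g 2 volume)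
    (hg'2 : MemLp (deriv g) 2 volume) (x : ℝ) :
    g x ^ 2 ≤ 2 * ∫ t, |g t * deriv g t| := by
  have hgc : Continuous g := hg.continuous
  have hg'c : Continuous (deriv g) := hg.continuous_deriv le_rfl
  have hsq : Integrable (fun t => g t ^ 2) volume := hg2.integrable_sq
  have hsq' : Integrable (fun t => deriv g t ^ 2) volume := hg'2.integrable_sq
  have hmul : Integrable (fun t => g t * deriv g t) volume := by
    refine Integrable.mono' (hsq.add hsq') ((hgc.mul hg'c).aestronglyMeasurable)
      (ae_of_all _ fun t => ?_)
    simp only [Pi.add_apply, Real.norm_eq_abs, abs_mul]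
    nlinarith [sq_abs (g t), sq_abs (deriv g t), sq_nonneg (|g t| - |deriv g t|),
      abs_nonneg (g t), abs_nonneg (deriv g t)]
  have habs : Integrable (fun t => |g t * deriv g t|) volume := hmul.abs
  -- tail of ∫ g² tends to 0
  have htail : Tendsto (fun n : ℕ => ∫ t in Set.Iic (-(n:ℝ)), g t ^ 2) atTop (𝓝 0) := by
    have hanti : Antitone (fun n : ℕ => Set.Iic (-(n:ℝ))) := by
      intro m n hmn
      exact Set.Iic_subset_Iic.mpr (by exact_mod_cast neg_le_neg (by exact_mod_cast hmn))
    have h := tendsto_setIntegral_of_antitone (fun n : ℕ => measurableSet_Iic) hanti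
      ⟨0, hsq.integrableOn⟩
    have hempty : (⋂ n : ℕ, Set.Iic (-(n:ℝ))) = ∅ := by
      ext t
      simp only [Set.mem_iInter, Set.mem_Iic, Set.mem_empty_iff_false, iff_false, not_forall,
        not_le]
      obtain ⟨n, hn⟩ := exists_nat_gt (-t)
      exact ⟨n, by linarith⟩
    rwa [hempty, setIntegral_empty] at h
  -- choose minimizers
  have hmin : ∀ n : ℕ, ∃ a ∈ Set.Icc (-(n:ℝ) - 1) (-(n:ℝ)),
      ∀ b ∈ Set.Icc (-(n:ℝ) - 1) (-(n:ℝ)), g a ^ 2 ≤ g b ^ 2 := by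
    intro n
    obtain ⟨a, ha, hmin⟩ := (isCompact_Icc (a := -(n:ℝ) - 1) (b := -(n:ℝ))).exists_isMinOn
      (f := fun t => g t ^ 2) (Set.nonempty_Icc.mpr (by linarith)) ((hgc.pow 2).continuousOn)
    exact ⟨a, ha, fun b hb => hmin hb⟩
  choose a ha hamin using hmin
  have hbound : ∀ n : ℕ, g (a n) ^ 2 ≤ ∫ t in Set.Iic (-(n:ℝ)), g t ^ 2 := by
    intro n
    have h1 : g (a n) ^ 2 * (volume (Set.Icc (-(n:ℝ) - 1) (-(n:ℝ)))).toReal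
        ≤ ∫ t in Set.Icc (-(n:ℝ) - 1) (-(n:ℝ)), g t ^ 2 :=
      setIntegral_ge_of_const_le_real measurableSet_Icc (by simp [Real.volume_Icc])
        (hamin n) hsq.integrableOn
    have hv : (volume (Set.Icc (-(n:ℝ) - 1) (-(n:ℝ)))).toReal = 1 := by
      rw [Real.volume_Icc]
      norm_num
    rw [hv, mul_one] at h1
    refine h1.trans (setIntegral_mono_set hsq.integrableOn
      (ae_of_all _ fun t => sq_nonneg _) (ae_of_all _ ?_))
    intro t ht
    exact ht.2
  have hto0 : Tendsto (fun n : ℕ => g (a n) ^ 2) atTop (𝓝 0) :=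
    squeeze_zero (fun n => sq_nonneg _) hbound htail
  -- FTC bound
  have hferm : ∀ᶠ n : ℕ in atTop, g x ^ 2 ≤ g (a n) ^ 2 + 2 * ∫ t, |g t * deriv g t| := by
    obtain ⟨N, hN⟩ := exists_nat_gt (-x)
    filter_upwards [eventually_ge_atTop N] with n hn
    have han : a n ≤ x := by
      have h1 := (ha n).2
      have : -(n:ℝ) ≤ -(N:ℝ) := by exact_mod_cast neg_le_neg (by exact_mod_cast hn)
      linarith
    have hderiv : ∀ t ∈ Set.uIcc (a n) x, HasDerivAt (fun t => g t ^ 2)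
        (2 * (g t * deriv g t)) t := by
      intro t _
      have h : HasDerivAt (fun t => g t ^ 2) ((2:ℕ) * g t ^ (2 - 1) * deriv g t) t :=
        ((hg.differentiable one_ne_zero t).hasDerivAt).pow 2
      convert h using 1
      ring
    have hInt : IntervalIntegrable (fun t => 2 * (g t * deriv g t)) volume (a n) x :=
      ((continuous_const.mul (hgc.mul hg'c))).intervalIntegrable _ _
    have hftc : ∫ t in (a n)..x, 2 * (g t * deriv g t) = g x ^ 2 - g (a n) ^ 2 :=
      intervalIntegral.integral_eq_sub_of_hasDerivAt hderiv hInt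
    have hle : ∫ t in (a n)..x, 2 * (g t * deriv g t) ≤ 2 * ∫ t, |g t * deriv g t| := by
      have h1 : ∫ t in (a n)..x, 2 * (g t * deriv g t)
          ≤ ∫ t in (a n)..x, 2 * |g t * deriv g t| := by
        apply intervalIntegral.integral_mono_on han hInt
          ((continuous_const.mul (hgc.mul hg'c).abs).intervalIntegrable _ _)
        intro t _
        have := le_abs_self (g t * deriv g t)
        show 2 * (g t * deriv g t) ≤ 2 * |g t * deriv g t|
        linarith
      refine h1.trans ?_
      rw [intervalIntegral.integral_of_le han, ← integral_const_mul]
      refine setIntegral_le_integral (habs.const_mul 2) (ae_of_all _ fun t => ?_)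
      positivity
    linarith [hftc ▸ hle]
  have hlim : Tendsto (fun n : ℕ => g (a n) ^ 2 + 2 * ∫ t, |g t * deriv g t|) atTop
      (𝓝 (0 + 2 * ∫ t, |g t * deriv g t|)) := hto0.add tendsto_const_nhds
  rw [zero_add] at hlim
  exact ge_of_tendsto hlim hferm


lemma agmon1d' (g : ℝ → ℝ) (hg : ContDiff ℝ 1 g) (hg2 : MemLp g 2 volume)
    (hg'2 : MemLp (deriv g) 2 volume) :
    eLpNorm g ⊤ volume ^ (2:ℝ) ≤ 2 * ∫⁻ t, (‖g t‖₊ : ℝ≥0∞) * ‖deriv g t‖₊ := by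
  have hgc : Continuous g := hg.continuous
  have hg'c : Continuous (deriv g) := hg.continuous_deriv le_rfl
  have hmul : Integrable (fun t => g t * deriv g t) volume := by
    refine Integrable.mono' (hg2.integrable_sq.add hg'2.integrable_sq)
      ((hgc.mul hg'c).aestronglyMeasurable) (ae_of_all _ fun t => ?_)
    simp only [Pi.add_apply, Real.norm_eq_abs, abs_mul]
    nlinarith [sq_abs (g t), sq_abs (deriv g t), sq_nonneg (|g t| - |deriv g t|),
      abs_nonneg (g t), abs_nonneg (deriv g t)]
  have habs : Integrable (fun t => |g t * deriv g t|) volume := hmul.abs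
  have hC : (0:ℝ) ≤ 2 * ∫ t, |g t * deriv g t| := by
    have : 0 ≤ ∫ t, |g t * deriv g t| := integral_nonneg fun t => abs_nonneg _
    linarith
  set C : ℝ := 2 * ∫ t, |g t * deriv g t| with hCdef
  have hps : ∀ x, g x ^ 2 ≤ C := agmon1d_s7 g hg hg2 hg'2
  have hbdd : eLpNorm g ⊤ volume ≤ ENNReal.ofReal (Real.sqrt C) := by
    rw [eLpNorm_exponent_top]
    refine eLpNormEssSup_le_of_ae_bound (ae_of_all _ fun x => ?_)
    rw [Real.norm_eq_abs]
    exact Real.abs_le_sqrt (hps x)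
  calc eLpNorm g ⊤ volume ^ (2:ℝ)
      ≤ ENNReal.ofReal (Real.sqrt C) ^ (2:ℝ) := ENNReal.rpow_le_rpow hbdd (by norm_num)
    _ = ENNReal.ofReal C := by
        rw [ENNReal.ofReal_rpow_of_nonneg (Real.sqrt_nonneg _) (by norm_num)]
        congr 1
        rw [show ((2:ℝ)) = ((2:ℕ):ℝ) by norm_num, Real.rpow_natCast]
        exact_mod_cast Real.sq_sqrt (by linarith [hC])
    _ = 2 * ∫⁻ t, (‖g t‖₊ : ℝ≥0∞) * ‖deriv g t‖₊ := by
        rw [hCdef, ENNReal.ofReal_mul (by norm_num),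
          ofReal_integral_eq_lintegral_ofReal habs (ae_of_all _ fun t => abs_nonneg _)]
        norm_num
        congr 1
        refine lintegral_congr fun t => ?_
        rw [← Real.enorm_eq_ofReal_abs, ← Real.enorm_eq_ofReal_abs, enorm_eq_nnnorm, enorm_eq_nnnorm]

lemma slice_lintegral (H : ℝ × ℝ × ℝ → ℝ≥0∞) (hm : Measurable H) :
    ∫⁻ yz : ℝ × ℝ, ∫⁻ x : ℝ, H (x, yz) = ∫⁻ p, H p := by
  have hprod : (volume : Measure (ℝ × ℝ × ℝ)) = (volume : Measure ℝ).prod volume :=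
    Measure.volume_eq_prod ℝ (ℝ × ℝ)
  have ham : AEMeasurable (Function.uncurry fun (x : ℝ) (yz : ℝ × ℝ) => H (x, yz))
      ((volume : Measure ℝ).prod (volume : Measure (ℝ × ℝ))) := by
    exact (hprod ▸ hm.aemeasurable)
  calc ∫⁻ yz : ℝ × ℝ, ∫⁻ x : ℝ, H (x, yz)
      = ∫⁻ x : ℝ, ∫⁻ yz : ℝ × ℝ, H (x, yz) := (lintegral_lintegral_swap ham).symm
    _ = ∫⁻ p, H p ∂((volume : Measure ℝ).prod volume) := (lintegral_prod _ ham).symm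
    _ = ∫⁻ p, H p := by rw [← hprod]

/-- Mixed norm bound: `‖f‖_{L²_{x₃}L²_{x₂}L^∞_{x₁}} ≤ √2 ‖f‖_{L²}^{1/2} ‖∂₁f‖_{L²}^{1/2}`. -/
theorem mixed_norm_Linfty_x1 (f : ℝ × ℝ × ℝ → ℝ) (hf : ContDiff ℝ 1 f)
    (h2 : MemLp f 2 volume) (h2' : MemLp (d1 f) 2 volume) :
    (eLpNorm (fun yz : ℝ × ℝ =>
        (eLpNorm (fun x1 : ℝ => f (x1, yz.1, yz.2)) ⊤ volume).toReal) 2 volume).toReal ≤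
      Real.sqrt 2 * (eLpNorm f 2 volume).toReal ^ ((1:ℝ)/2) *
        (eLpNorm (d1 f) 2 volume).toReal ^ ((1:ℝ)/2) := by
  have hfc : Continuous f := hf.continuous
  have hd1c : Continuous (d1 f) := (hf.continuous_fderiv one_ne_zero).clm_apply continuous_const
  set F : ℝ × ℝ × ℝ → ℝ≥0∞ := fun p => (‖f p‖₊ : ℝ≥0∞) with hFdef
  set Fd : ℝ × ℝ × ℝ → ℝ≥0∞ := fun p => (‖d1 f p‖₊ : ℝ≥0∞) with hFddef
  have hFm : Measurable F := hfc.measurable.nnnorm.coe_nnreal_ennreal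
  have hFdm : Measurable Fd := hd1c.measurable.nnnorm.coe_nnreal_ennreal
  set A := eLpNorm f 2 volume with hAdef
  set B := eLpNorm (d1 f) 2 volume with hBdef
  have hAeq : A = (∫⁻ p, F p ^ (2:ℝ)) ^ ((1:ℝ)/2) := by
    rw [hAdef, eLpNorm_eq_lintegral_rpow_enorm_toReal two_ne_zero ENNReal.ofNat_ne_top]
    simp only [enorm_eq_nnnorm]
    norm_num
    rfl
  have hBeq : B = (∫⁻ p, Fd p ^ (2:ℝ)) ^ ((1:ℝ)/2) := by
    rw [hBdef, eLpNorm_eq_lintegral_rpow_enorm_toReal two_ne_zero ENNReal.ofNat_ne_top]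
    simp only [enorm_eq_nnnorm]
    norm_num
    rfl
  have hIA : ∫⁻ p, F p ^ (2:ℝ) < ⊤ := by
    have := h2.2
    rw [← hAdef, hAeq, ENNReal.rpow_lt_top_iff_of_pos (by norm_num)] at this
    exact this
  have hIB : ∫⁻ p, Fd p ^ (2:ℝ) < ⊤ := by
    have := h2'.2
    rw [← hBdef, hBeq, ENNReal.rpow_lt_top_iff_of_pos (by norm_num)] at this
    exact this
  have hAne : A ≠ ⊤ := h2.2.ne
  have hBne : B ≠ ⊤ := h2'.2.ne
  -- Hölder on ℝ³
  have hHolder : ∫⁻ p, F p * Fd p ≤ A * B := by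
    rw [hAeq, hBeq]
    exact ENNReal.lintegral_mul_le_Lp_mul_Lq volume Real.HolderConjugate.two_two
      hFm.aemeasurable hFdm.aemeasurable
  -- a.e. slice finiteness
  have hslice : ∀ (H : ℝ × ℝ × ℝ → ℝ≥0∞), Measurable H → (∫⁻ p, H p) < ⊤ →
      ∀ᵐ yz : ℝ × ℝ, (∫⁻ x : ℝ, H (x, yz)) < ⊤ := by
    intro H hm hfin
    refine ae_lt_top (Measurable.lintegral_prod_left ?_) ?_
    · exact hm
    · rw [slice_lintegral H hm]; exact hfin.ne
  have hfslice := hslice (fun p => F p ^ (2:ℝ)) (hFm.pow_const _) hIA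
  have hdslice := hslice (fun p => Fd p ^ (2:ℝ)) (hFdm.pow_const _) hIB
  -- pointwise a.e. key bound
  have hkey : ∀ᵐ yz : ℝ × ℝ, (eLpNorm (fun x1 : ℝ => f (x1, yz.1, yz.2)) ⊤ volume) ^ (2:ℝ)
      ≤ 2 * ∫⁻ x : ℝ, F (x, yz) * Fd (x, yz) := by
    filter_upwards [hfslice, hdslice] with yz h1 h2slice
    set g : ℝ → ℝ := fun x => f (x, yz.1, yz.2) with hgdef
    have hgC1 : ContDiff ℝ 1 g := hf.comp (contDiff_id.prodMk contDiff_const)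
    have hd : ∀ x, deriv g x = d1 f (x, yz.1, yz.2) := by
      intro x
      have hL : HasDerivAt (fun x : ℝ => (x, yz.1, yz.2)) (1, 0, 0) x := by
        have := (hasDerivAt_id x).prodMk (hasDerivAt_const x (yz.1, yz.2))
        simpa [Prod.mk.injEq, Prod.mk_zero_zero] using this
      exact (((hf.differentiable one_ne_zero _).hasFDerivAt).comp_hasDerivAt x hL).deriv
    have hg2 : MemLp g 2 volume := by
      refine ⟨hgC1.continuous.aestronglyMeasurable, ?_⟩
      rw [eLpNorm_eq_lintegral_rpow_enorm_toReal two_ne_zero ENNReal.ofNat_ne_top]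
      refine ENNReal.rpow_lt_top_of_nonneg (by norm_num) ?_
      have : ((2:ℝ≥0∞).toReal) = (2:ℝ) := by norm_num
      rw [this]
      exact h1.ne
    have hg'2 : MemLp (deriv g) 2 volume := by
      have hde : deriv g = fun x => d1 f (x, yz.1, yz.2) := funext hd
      rw [hde]
      refine ⟨(hd1c.comp (continuous_id.prodMk continuous_const)).aestronglyMeasurable, ?_⟩
      rw [eLpNorm_eq_lintegral_rpow_enorm_toReal two_ne_zero ENNReal.ofNat_ne_top]
      refine ENNReal.rpow_lt_top_of_nonneg (by norm_num) ?_
      have : ((2:ℝ≥0∞).toReal) = (2:ℝ) := by norm_num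
      rw [this]
      exact h2slice.ne
    have := agmon1d' g hgC1 hg2 hg'2
    refine this.trans (le_of_eq ?_)
    congr 1
    refine lintegral_congr fun x => ?_
    rw [hd x]
  -- assemble
  set G : ℝ × ℝ → ℝ := fun yz =>
    (eLpNorm (fun x1 : ℝ => f (x1, yz.1, yz.2)) ⊤ volume).toReal with hGdef
  have hLeq : eLpNorm G 2 volume = (∫⁻ yz : ℝ × ℝ, (‖G yz‖₊ : ℝ≥0∞) ^ (2:ℝ)) ^ ((1:ℝ)/2) := by
    rw [eLpNorm_eq_lintegral_rpow_enorm_toReal two_ne_zero ENNReal.ofNat_ne_top]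
    simp only [enorm_eq_nnnorm]
    norm_num
  have hmono : ∫⁻ yz : ℝ × ℝ, (‖G yz‖₊ : ℝ≥0∞) ^ (2:ℝ) ≤ 2 * (A * B) := by
    have step1 : ∫⁻ yz : ℝ × ℝ, (‖G yz‖₊ : ℝ≥0∞) ^ (2:ℝ)
        ≤ ∫⁻ yz : ℝ × ℝ, 2 * ∫⁻ x : ℝ, F (x, yz) * Fd (x, yz) := by
      refine lintegral_mono_ae (hkey.mono fun yz h => ?_)
      refine le_trans (ENNReal.rpow_le_rpow ?_ (by norm_num)) h
      rw [← enorm_eq_nnnorm, Real.enorm_eq_ofReal_abs, abs_of_nonneg ENNReal.toReal_nonneg]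
      exact ENNReal.ofReal_toReal_le
    refine step1.trans ?_
    have hm2 : Measurable fun yz : ℝ × ℝ => ∫⁻ x : ℝ, F (x, yz) * Fd (x, yz) :=
      Measurable.lintegral_prod_left (hFm.mul hFdm)
    rw [lintegral_const_mul 2 hm2, slice_lintegral (fun p => F p * Fd p) (hFm.mul hFdm)]
    exact mul_le_mul_right hHolder 2
  have hfin : 2 * (A * B) ≠ ⊤ := by
    refine ENNReal.mul_ne_top (by norm_num) (ENNReal.mul_ne_top hAne hBne)
  have hLle : eLpNorm G 2 volume ≤ (2 * (A * B)) ^ ((1:ℝ)/2) := by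
    rw [hLeq]
    exact ENNReal.rpow_le_rpow hmono (by norm_num)
  have htr : (eLpNorm G 2 volume).toReal ≤ ((2 * (A * B)) ^ ((1:ℝ)/2)).toReal :=
    ENNReal.toReal_mono (by
      exact (ENNReal.rpow_lt_top_iff_of_pos (by norm_num)).mpr hfin.lt_top |>.ne) hLle
  refine htr.trans (le_of_eq ?_)
  rw [← ENNReal.toReal_rpow, ENNReal.toReal_mul, ENNReal.toReal_mul]
  rw [Real.mul_rpow (by norm_num) (by positivity), Real.mul_rpow ENNReal.toReal_nonneg
    ENNReal.toReal_nonneg]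
  rw [Real.sqrt_eq_rpow]
  norm_num
  ring
end
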